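/- arXiv:1410.1390 — 5 statements merged into one kernel-verified Lean document; each statement's English description precedes it below -/
import Mathlib

section
/- (Lemma 2.1) Let the sequences {x_k^t}, {x_0^t}, {y_k^t} be generated by the flexible ADMM (Algorithm 2) for the consensus problem, with an arbitrary choice of index sets C^{t+1}. Then for every t ≥ 1 and every k ∈ {1,…,K}: (i) ∇g_k(x_k^{t+1}) = −y_k^{t+1}, and (ii) L_k² ‖x_k^{t+1} − x_k^t‖² ≥ ‖y_k^{t+1} − y_k^t‖². -/
open Filter
open scoped RealInnerProductSpace BigOperators

/-- Augmented Lagrangian for the reformulated consensus problem: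
`L({x_k}, x_0; y) = Σ_k g_k(x_k) + h(x_0) + Σ_k ⟨y_k, x_k − x_0⟩ + Σ_k (ρ_k/2)‖x_k − x_0‖²`. -/
noncomputable def augL {N K : ℕ} (g : Fin K → EuclideanSpace ℝ (Fin N) → ℝ)
    (h : EuclideanSpace ℝ (Fin N) → ℝ) (ρ : Fin K → ℝ)
    (xk : Fin K → EuclideanSpace ℝ (Fin N)) (x0 : EuclideanSpace ℝ (Fin N))
    (y : Fin K → EuclideanSpace ℝ (Fin N)) : ℝ :=
  (∑ k, g k (xk k)) + h x0 + (∑ k, ⟪y k, xk k - x0⟫)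
    + ∑ k, ρ k / 2 * ‖xk k - x0‖ ^ 2

open InnerProductSpace in
lemma first_order {N : ℕ} (gk : EuclideanSpace ℝ (Fin N) → ℝ)
    (gk' : EuclideanSpace ℝ (Fin N) → EuclideanSpace ℝ (Fin N))
    (hgrad : ∀ z, HasGradientAt gk (gk' z) z)
    (y x0 xs : EuclideanSpace ℝ (Fin N)) (ρ : ℝ)
    (hmin : ∀ z, gk xs + ⟪y, xs - x0⟫ + ρ/2 * ‖xs - x0‖^2
      ≤ gk z + ⟪y, z - x0⟫ + ρ/2 * ‖z - x0‖^2) :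
    gk' xs = -(y + ρ • (xs - x0)) := by
  have h1 : HasFDerivAt gk (toDual ℝ _ (gk' xs)) xs := (hgrad xs).hasFDerivAt
  have h2 : HasFDerivAt (fun z : EuclideanSpace ℝ (Fin N) => ⟪y, z - x0⟫)
      (toDual ℝ _ y) xs := by
    have := (hasFDerivAt_const y xs).inner ℝ ((hasFDerivAt_id xs).sub_const x0)
    refine this.congr_fderiv ?_
    ext v
    simp [fderivInnerCLM_apply]
  have h3 : HasFDerivAt (fun z : EuclideanSpace ℝ (Fin N) => ‖z - x0‖^2)
      (toDual ℝ _ ((2:ℝ) • (xs - x0))) xs := by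
    have h := ((hasFDerivAt_id xs).sub_const x0).inner ℝ ((hasFDerivAt_id xs).sub_const x0)
    have heq : (fun z : EuclideanSpace ℝ (Fin N) => ‖z - x0‖^2)
        = fun z : EuclideanSpace ℝ (Fin N) => ⟪z - x0, z - x0⟫ := by
      funext z; rw [real_inner_self_eq_norm_sq]
    rw [heq]
    refine h.congr_fderiv ?_
    ext v
    simp [fderivInnerCLM_apply, inner_smul_left, inner_sub_left, inner_sub_right,
      real_inner_comm, two_mul, mul_comm]
  have htot : HasFDerivAt
      (fun z : EuclideanSpace ℝ (Fin N) => gk z + ⟪y, z - x0⟫ + ρ/2 * ‖z - x0‖^2)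
      (toDual ℝ _ (gk' xs) + toDual ℝ _ y + (ρ/2) • toDual ℝ _ ((2:ℝ) • (xs - x0))) xs :=
    (h1.add h2).add (h3.const_mul (ρ/2))
  have hloc : IsLocalMin
      (fun z : EuclideanSpace ℝ (Fin N) => gk z + ⟪y, z - x0⟫ + ρ/2 * ‖z - x0‖^2) xs :=
    Filter.Eventually.of_forall hmin
  have hz := hloc.hasFDerivAt_eq_zero htot
  have h4 : toDual ℝ (EuclideanSpace ℝ (Fin N)) (gk' xs + (y + ρ • (xs - x0))) = 0 := by
    rw [map_add, map_add, ← hz]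
    ext v
    simp [inner_smul_left, inner_add_left]
    ring
  have h0 : gk' xs + (y + ρ • (xs - x0)) = 0 :=
    (toDual ℝ (EuclideanSpace ℝ (Fin N))).map_eq_zero_iff.mp h4
  exact eq_neg_of_add_eq_zero_left h0



/-- **Lemma 2.1.**  For the flexible ADMM (Algorithm 2) on the consensus problem,
for every `t ≥ 1` and every block `k`:
(i) `∇g_k(x_k^{t+1}) = −y_k^{t+1}`, and
(ii) `L_k² ‖x_k^{t+1} − x_k^t‖² ≥ ‖y_k^{t+1} − y_k^t‖²`. -/

theorem lemma2_1
    {N K : ℕ} (hK : 1 ≤ K)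
    (g : Fin K → EuclideanSpace ℝ (Fin N) → ℝ)
    (g' : Fin K → EuclideanSpace ℝ (Fin N) → EuclideanSpace ℝ (Fin N))
    (h : EuclideanSpace ℝ (Fin N) → ℝ)
    (X : Set (EuclideanSpace ℝ (Fin N)))
    (Lg ρ : Fin K → ℝ)
    (x : ℕ → Fin K → EuclideanSpace ℝ (Fin N))
    (x0 : ℕ → EuclideanSpace ℝ (Fin N))
    (y : ℕ → Fin K → EuclideanSpace ℝ (Fin N))
    (C : ℕ → Finset (Option (Fin K)))
    -- data assumptions
    (hgrad : ∀ k z, HasGradientAt (g k) (g' k z) z)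
    (hLpos : ∀ k, 0 < Lg k)
    (hLip : ∀ k u v, ‖g' k u - g' k v‖ ≤ Lg k * ‖u - v‖)
    (hconv : ConvexOn ℝ Set.univ h)
    (hXne : X.Nonempty) (hXcl : IsClosed X) (hXcv : Convex ℝ X)
    (hρ : ∀ k, 0 < ρ k)
    -- Algorithm 2
    (hC1 : C 1 = Finset.univ)
    (hx0upd : ∀ t : ℕ,
      (none ∈ C (t + 1) → x0 (t + 1) ∈ X ∧ ∀ z ∈ X,
        augL g h ρ (x t) (x0 (t + 1)) (y t) ≤ augL g h ρ (x t) z (y t)) ∧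
      (none ∉ C (t + 1) → x0 (t + 1) = x0 t))
    (hxupd : ∀ (t : ℕ) (k : Fin K),
      (some k ∈ C (t + 1) → ∀ z : EuclideanSpace ℝ (Fin N),
        g k (x (t + 1) k) + ⟪y t k, x (t + 1) k - x0 (t + 1)⟫
            + ρ k / 2 * ‖x (t + 1) k - x0 (t + 1)‖ ^ 2
          ≤ g k z + ⟪y t k, z - x0 (t + 1)⟫ + ρ k / 2 * ‖z - x0 (t + 1)‖ ^ 2) ∧
      (some k ∉ C (t + 1) → x (t + 1) k = x t k))
    (hyupd : ∀ (t : ℕ) (k : Fin K),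
      (some k ∈ C (t + 1) → y (t + 1) k = y t k + ρ k • (x (t + 1) k - x0 (t + 1))) ∧
      (some k ∉ C (t + 1) → y (t + 1) k = y t k)) :
    ∀ t : ℕ, 1 ≤ t → ∀ k : Fin K,
      g' k (x (t + 1) k) = -(y (t + 1) k) ∧
      ‖y (t + 1) k - y t k‖ ^ 2 ≤ (Lg k) ^ 2 * ‖x (t + 1) k - x t k‖ ^ 2 := by
  -- step lemma: gradient identity when block k is updated at step t+1
  have step : ∀ (t : ℕ) (k : Fin K), some k ∈ C (t + 1) →
      g' k (x (t + 1) k) = -(y (t + 1) k) := by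
    intro t k hk
    have hmin := (hxupd t k).1 hk
    have h0 := first_order (g k) (g' k) (hgrad k) (y t k) (x0 (t + 1)) (x (t + 1) k) (ρ k) hmin
    rw [(hyupd t k).1 hk]
    rw [h0]
  -- invariant: for all s ≥ 1, gradient identity holds
  have inv : ∀ s : ℕ, 1 ≤ s → ∀ k : Fin K, g' k (x s k) = -(y s k) := by
    intro s hs
    induction s with
    | zero => omega
    | succ n ih =>
      intro k
      by_cases hk : some k ∈ C (n + 1)
      · exact step n k hk
      · have hn : 1 ≤ n := by
          rcases Nat.eq_or_lt_of_le hs with h | h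
          · exfalso; apply hk
            have : n = 0 := by omega
            rw [this, hC1]; exact Finset.mem_univ _
          · omega
        rw [(hxupd n k).2 hk, (hyupd n k).2 hk]
        exact ih hn k
  intro t ht k
  have h1 := inv (t + 1) (by omega) k
  have h2 := inv t ht k
  refine ⟨h1, ?_⟩
  have hy : y (t + 1) k - y t k = -(g' k (x (t + 1) k) - g' k (x t k)) := by
    rw [h1, h2] at *; abel
  have hnorm : ‖y (t + 1) k - y t k‖ = ‖g' k (x (t + 1) k) - g' k (x t k)‖ := by
    rw [hy, norm_neg]
  have hle : ‖y (t + 1) k - y t k‖ ≤ Lg k * ‖x (t + 1) k - x t k‖ := by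
    rw [hnorm]; exact hLip k _ _
  calc ‖y (t + 1) k - y t k‖ ^ 2 ≤ (Lg k * ‖x (t + 1) k - x t k‖) ^ 2 := by
        apply pow_le_pow_left₀ (norm_nonneg _) hle
    _ = (Lg k) ^ 2 * ‖x (t + 1) k - x t k‖ ^ 2 := by ring
end

section
/- (Lemma 2.2) Let the sequences {x_k^t}, {x_0^t}, {y_k^t} be generated by the flexible ADMM (Algorithm 2) for the consensus problem, with an arbitrary choice of index sets C^{t+1}, and suppose Assumption A2 holds. Then for every t ≥ 1: L({x_k^{t+1}}, x_0^{t+1}; y^{t+1}) − L({x_k^t}, x_0^t; y^t) ≤ Σ_{k ∈ C^{t+1}, k ≠ 0} (L_k²/ρ_k − γ_k(ρ_k)/2) ‖x_k^{t+1} − x_k^t‖² − (γ/2) ‖x_0^{t+1} − x_0^t‖², where γ := Σ_{k=1}^K ρ_k. -/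
open Filter
open scoped RealInnerProductSpace BigOperators

section AuxLemmas

variable {E : Type*} [NormedAddCommGroup E] [InnerProductSpace ℝ E]

/-- Strong convexity plus minimality over a set gives quadratic growth. -/
lemma strong_min_gap {s : Set E} {m : ℝ} (hm : 0 ≤ m) {f : E → ℝ}
    (hf : StrongConvexOn s m f) {a : E} (ha : a ∈ s)
    (hmin : ∀ z ∈ s, f a ≤ f z) {z : E} (hz : z ∈ s) :
    f a + m / 2 * ‖z - a‖ ^ 2 ≤ f z := by
  set c : ℝ := m / 2 * ‖z - a‖ ^ 2 with hc
  have hc0 : 0 ≤ c := by positivity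
  have key : ∀ θ : ℝ, 0 < θ → θ < 1 → f a + c ≤ f z + θ * c := by
    intro θ hθ0 hθ1
    have hb0 : (0:ℝ) ≤ 1 - θ := by linarith
    have hmem : θ • z + (1 - θ) • a ∈ s := hf.1 hz ha (le_of_lt hθ0) hb0 (by ring)
    have h2 := hf.2 hz ha (le_of_lt hθ0) hb0 (by ring)
    have h3 := hmin _ hmem
    have h4 : f a ≤ θ * f z + (1 - θ) * f a - θ * (1 - θ) * c := by
      calc f a ≤ f (θ • z + (1 - θ) • a) := h3
        _ ≤ θ • f z + (1 - θ) • f a - θ * (1 - θ) * (m / 2 * ‖z - a‖ ^ 2) := h2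
        _ = θ * f z + (1 - θ) * f a - θ * (1 - θ) * c := by rw [hc]; norm_num
    nlinarith
  refine le_of_forall_pos_le_add ?_
  intro ε hε
  have hθ : 0 < min (1/2) (ε / (c + 1)) := by positivity
  have hθ1 : min (1/2) (ε / (c + 1)) < 1 :=
    lt_of_le_of_lt (min_le_left _ _) (by norm_num)
  have hkey := key _ hθ hθ1
  have hle : min (1/2) (ε / (c + 1)) * c ≤ ε := by
    have h1 : min (1/2) (ε / (c + 1)) ≤ ε / (c + 1) := min_le_right _ _
    have h2 : ε / (c + 1) * c ≤ ε := by
      rw [div_mul_eq_mul_div, div_le_iff₀ (by linarith)]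
      nlinarith
    nlinarith [mul_le_mul_of_nonneg_right h1 hc0]
  linarith

/-- An affine function built from an inner product is convex. -/
lemma convexOn_inner_affine {s : Set E} (hs : Convex ℝ s) (a : E) (c : ℝ) :
    ConvexOn ℝ s (fun z => ⟪a, z⟫ + c) := by
  refine ⟨hs, fun u hu v hv p q hp hq hpq => le_of_eq ?_⟩
  simp only [inner_add_right, real_inner_smul_right, smul_eq_mul]
  linear_combination (-c) * hpq

/-- Strong convexity is preserved when adding the ADMM linear and proximal terms. -/
lemma strong_transfer {γ r : ℝ} {g : E → ℝ} (y x0 : E)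
    (hs : StrongConvexOn Set.univ γ (fun z : E => g z + r / 2 * ‖z‖ ^ 2)) :
    StrongConvexOn Set.univ γ
      (fun z : E => g z + ⟪y, z - x0⟫ + r / 2 * ‖z - x0‖ ^ 2) := by
  rw [strongConvexOn_iff_convex] at hs ⊢
  have heq : (fun z : E => g z + ⟪y, z - x0⟫ + r / 2 * ‖z - x0‖ ^ 2 - γ / 2 * ‖z‖ ^ 2)
      = fun z : E => (g z + r / 2 * ‖z‖ ^ 2 - γ / 2 * ‖z‖ ^ 2)
          + (⟪y - r • x0, z⟫ + (r / 2 * ‖x0‖ ^ 2 - ⟪y, x0⟫)) := by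
    funext z
    simp only [inner_sub_right, inner_sub_left, real_inner_smul_left, norm_sub_sq_real]
    rw [real_inner_comm z x0]
    ring
  rw [heq]
  exact hs.add (convexOn_inner_affine convex_univ _ _)

variable [CompleteSpace E]

/-- The gradient of a global minimizer (over the whole space) vanishes. -/
lemma grad_zero_of_min {f : E → ℝ} {G a : E} (hf : HasGradientAt f G a)
    (hmin : ∀ z, f a ≤ f z) : G = 0 := by
  have hlm : IsLocalMin f a := Filter.Eventually.of_forall fun z => hmin z
  have h0 := hlm.hasFDerivAt_eq_zero hf.hasFDerivAt
  have := congrArg (InnerProductSpace.toDual ℝ E).symm h0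
  simpa using this

/-- Gradient of the ADMM subproblem objective. -/
lemma hasGradientAt_admm (g : E → ℝ) (gz : E) (y x0 : E) (r : ℝ) (z : E)
    (hg : HasGradientAt g gz z) :
    HasGradientAt (fun w => g w + ⟪y, w - x0⟫ + r / 2 * ‖w - x0‖ ^ 2)
      (gz + y + r • (z - x0)) z := by
  rw [hasGradientAt_iff_hasFDerivAt]
  have e1 : HasFDerivAt (fun w : E => ⟪y, w - x0⟫) (innerSL ℝ y) z := by
    have h := ((innerSL ℝ y).hasFDerivAt (x := z)).sub_const ⟪y, x0⟫
    have heq : (fun w : E => (innerSL ℝ y) w - ⟪y, x0⟫) = fun w : E => ⟪y, w - x0⟫ := by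
      funext w; simp [inner_sub_right]
    rwa [heq] at h
  have e2 : HasFDerivAt (fun w : E => r / 2 * ‖w - x0‖ ^ 2)
      ((r / 2) • (2 • (innerSL ℝ (z - x0)).comp (ContinuousLinearMap.id ℝ E))) z :=
    (((hasFDerivAt_id z).sub_const x0).norm_sq).const_mul (r / 2)
  have h1 := (hg.hasFDerivAt.add e1).add e2
  refine h1.congr_fderiv ?_
  ext w
  simp [inner_add_left, real_inner_smul_left, InnerProductSpace.toDual_apply_apply]
  ring

end AuxLemmas

/-- The augmented Lagrangian is strongly convex in `x0`, with modulus `∑ k, ρ k`. -/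
lemma strong_aug0 {N K : ℕ} (g : Fin K → EuclideanSpace ℝ (Fin N) → ℝ)
    (h : EuclideanSpace ℝ (Fin N) → ℝ) (ρ : Fin K → ℝ)
    (xk : Fin K → EuclideanSpace ℝ (Fin N)) (y : Fin K → EuclideanSpace ℝ (Fin N))
    (hconv : ConvexOn ℝ Set.univ h) :
    StrongConvexOn Set.univ (∑ k, ρ k) (fun z => augL g h ρ xk z y) := by
  rw [strongConvexOn_iff_convex]
  have heq : (fun z => augL g h ρ xk z y - (∑ k, ρ k) / 2 * ‖z‖ ^ 2)
      = fun z : EuclideanSpace ℝ (Fin N) => h z + (⟪-((∑ k, y k) + ∑ k, ρ k • xk k), z⟫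
          + ((∑ k, g k (xk k)) + (∑ k, ⟪y k, xk k⟫) + ∑ k, ρ k / 2 * ‖xk k‖ ^ 2)) := by
    funext z
    simp only [augL]
    have e1 : ∑ k, ⟪y k, xk k - z⟫ = (∑ k, ⟪y k, xk k⟫) - ∑ k, ⟪y k, z⟫ := by
      simp [inner_sub_right, Finset.sum_sub_distrib]
    have e2 : ∑ k, ρ k / 2 * ‖xk k - z‖ ^ 2
        = (∑ k, ρ k / 2 * ‖xk k‖ ^ 2) - (∑ k, ρ k * ⟪xk k, z⟫)
          + (∑ k, ρ k) / 2 * ‖z‖ ^ 2 := by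
      have e : ∀ k : Fin K, ρ k / 2 * ‖xk k - z‖ ^ 2
          = ρ k / 2 * ‖xk k‖ ^ 2 - ρ k * ⟪xk k, z⟫ + ρ k / 2 * ‖z‖ ^ 2 := by
        intro k; rw [norm_sub_sq_real]; ring
      rw [Finset.sum_congr rfl fun k _ => e k, Finset.sum_add_distrib,
        Finset.sum_sub_distrib]
      congr 1
      rw [Finset.sum_div, Finset.sum_mul]
    have e3 : ⟪-((∑ k, y k) + ∑ k, ρ k • xk k), z⟫
        = -((∑ k, ⟪y k, z⟫) + ∑ k, ρ k * ⟪xk k, z⟫) := by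
      rw [inner_neg_left, inner_add_left, sum_inner, sum_inner]
      simp only [real_inner_smul_left]
    rw [e1, e2, e3]
    ring
  rw [heq]
  exact hconv.add (convexOn_inner_affine convex_univ _ _)

/-- **Lemma 2.2.**  For the flexible ADMM (Algorithm 2) on the consensus problem, under
Assumption A2, for every `t ≥ 1`:
`L({x^{t+1}}, x_0^{t+1}; y^{t+1}) − L({x^t}, x_0^t; y^t)
  ≤ Σ_{k∈C^{t+1}, k≠0} (L_k²/ρ_k − γ_k/2)‖x_k^{t+1} − x_k^t‖² − (γ/2)‖x_0^{t+1} − x_0^t‖²`,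
where `γ = Σ_k ρ_k`. -/
theorem lemma2_2
    {N K : ℕ} (hK : 1 ≤ K)
    (g : Fin K → EuclideanSpace ℝ (Fin N) → ℝ)
    (g' : Fin K → EuclideanSpace ℝ (Fin N) → EuclideanSpace ℝ (Fin N))
    (h : EuclideanSpace ℝ (Fin N) → ℝ)
    (X : Set (EuclideanSpace ℝ (Fin N)))
    (Lg ρ γ : Fin K → ℝ)
    (x : ℕ → Fin K → EuclideanSpace ℝ (Fin N))
    (x0 : ℕ → EuclideanSpace ℝ (Fin N))
    (y : ℕ → Fin K → EuclideanSpace ℝ (Fin N))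
    (C : ℕ → Finset (Option (Fin K)))
    -- data assumptions (Assumption A1)
    (hgrad : ∀ k z, HasGradientAt (g k) (g' k z) z)
    (hLpos : ∀ k, 0 < Lg k)
    (hLip : ∀ k u v, ‖g' k u - g' k v‖ ≤ Lg k * ‖u - v‖)
    (hconv : ConvexOn ℝ Set.univ h)
    (hXne : X.Nonempty) (hXcl : IsClosed X) (hXcv : Convex ℝ X)
    (hρ : ∀ k, 0 < ρ k)
    -- Assumption A2
    (hγpos : ∀ k, 0 < γ k)
    (hstrong : ∀ k, StrongConvexOn Set.univ (γ k)
      (fun z : EuclideanSpace ℝ (Fin N) => g k z + ρ k / 2 * ‖z‖ ^ 2))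
    (hA2b : ∀ k, 2 * Lg k ^ 2 < ρ k * γ k)
    (hA2c : ∀ k, Lg k ≤ ρ k)
    -- Algorithm 2
    (hC1 : C 1 = Finset.univ)
    (hx0upd : ∀ t : ℕ,
      (none ∈ C (t + 1) → x0 (t + 1) ∈ X ∧ ∀ z ∈ X,
        augL g h ρ (x t) (x0 (t + 1)) (y t) ≤ augL g h ρ (x t) z (y t)) ∧
      (none ∉ C (t + 1) → x0 (t + 1) = x0 t))
    (hxupd : ∀ (t : ℕ) (k : Fin K),
      (some k ∈ C (t + 1) → ∀ z : EuclideanSpace ℝ (Fin N),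
        g k (x (t + 1) k) + ⟪y t k, x (t + 1) k - x0 (t + 1)⟫
            + ρ k / 2 * ‖x (t + 1) k - x0 (t + 1)‖ ^ 2
          ≤ g k z + ⟪y t k, z - x0 (t + 1)⟫ + ρ k / 2 * ‖z - x0 (t + 1)‖ ^ 2) ∧
      (some k ∉ C (t + 1) → x (t + 1) k = x t k))
    (hyupd : ∀ (t : ℕ) (k : Fin K),
      (some k ∈ C (t + 1) → y (t + 1) k = y t k + ρ k • (x (t + 1) k - x0 (t + 1))) ∧
      (some k ∉ C (t + 1) → y (t + 1) k = y t k)) :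
    ∀ t : ℕ, 1 ≤ t →
      augL g h ρ (x (t + 1)) (x0 (t + 1)) (y (t + 1))
          - augL g h ρ (x t) (x0 t) (y t)
        ≤ (∑ k ∈ Finset.univ.filter (fun k : Fin K => some k ∈ C (t + 1)),
            (Lg k ^ 2 / ρ k - γ k / 2) * ‖x (t + 1) k - x t k‖ ^ 2)
          - (∑ k, ρ k) / 2 * ‖x0 (t + 1) - x0 t‖ ^ 2 := by
  -- first-order condition for the `x_k`-updates
  have hkey : ∀ (s : ℕ) (k : Fin K), some k ∈ C (s + 1) →
      y (s + 1) k = -(g' k (x (s + 1) k)) := by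
    intro s k hk
    have hminF := (hxupd s k).1 hk
    have hgradF := hasGradientAt_admm (g k) (g' k (x (s + 1) k)) (y s k) (x0 (s + 1)) (ρ k)
      (x (s + 1) k) (hgrad k _)
    have h0 : g' k (x (s + 1) k) + y s k + ρ k • (x (s + 1) k - x0 (s + 1)) = 0 :=
      grad_zero_of_min hgradF hminF
    rw [add_assoc] at h0
    have h1 := eq_neg_of_add_eq_zero_right h0
    rw [(hyupd s k).1 hk, h1]
  -- invariant: the multipliers are minus the gradients
  have hyinv : ∀ s : ℕ, 1 ≤ s → ∀ k, y s k = -(g' k (x s k)) := by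
    intro s
    induction s with
    | zero => intro hs; omega
    | succ n ih =>
      intro _ k
      by_cases hk : some k ∈ C (n + 1)
      · exact hkey n k hk
      · rcases Nat.eq_zero_or_pos n with h0 | hpos
        · subst h0
          exact absurd (by rw [hC1]; exact Finset.mem_univ _) hk
        · rw [(hyupd n k).2 hk, (hxupd n k).2 hk]
          exact ih hpos k
  -- invariant: `x0 t ∈ X` for `t ≥ 1`
  have hx0X : ∀ s : ℕ, 1 ≤ s → x0 s ∈ X := by
    intro s
    induction s with
    | zero => intro hs; omega
    | succ n ih =>
      intro _
      by_cases hm : none ∈ C (n + 1)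
      · exact ((hx0upd n).1 hm).1
      · rcases Nat.eq_zero_or_pos n with h0 | hpos
        · subst h0
          exact absurd (by rw [hC1]; exact Finset.mem_univ _) hm
        · rw [(hx0upd n).2 hm]
          exact ih hpos
  intro t ht
  set S : ℝ := ∑ k, ρ k with hS
  have hSpos : 0 < S := Finset.sum_pos (fun k _ => hρ k) ⟨⟨0, hK⟩, Finset.mem_univ _⟩
  -- Part 1 : decrease from the x0-update
  have part1 : augL g h ρ (x t) (x0 (t + 1)) (y t) - augL g h ρ (x t) (x0 t) (y t)
      ≤ -(S / 2 * ‖x0 (t + 1) - x0 t‖ ^ 2) := by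
    by_cases hm : none ∈ C (t + 1)
    · obtain ⟨hmem, hminX⟩ := (hx0upd t).1 hm
      have hsc : StrongConvexOn Set.univ S (fun z => augL g h ρ (x t) z (y t)) :=
        strong_aug0 g h ρ (x t) (y t) hconv
      have hscX : StrongConvexOn X S (fun z => augL g h ρ (x t) z (y t)) :=
        ⟨hXcv, fun u hu v hv a b ha hb hab => hsc.2 trivial trivial ha hb hab⟩
      have hgap := strong_min_gap (le_of_lt hSpos) hscX hmem hminX (hx0X t ht)
      rw [norm_sub_rev (x0 t)] at hgap
      linarith
    · rw [(hx0upd t).2 hm]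
      simp
  -- Part 2 : decrease from the x_k- and y_k-updates
  have part2 : augL g h ρ (x (t + 1)) (x0 (t + 1)) (y (t + 1))
        - augL g h ρ (x t) (x0 (t + 1)) (y t)
      ≤ ∑ k ∈ Finset.univ.filter (fun k : Fin K => some k ∈ C (t + 1)),
          (Lg k ^ 2 / ρ k - γ k / 2) * ‖x (t + 1) k - x t k‖ ^ 2 := by
    set X0 := x0 (t + 1) with hX0
    set D : Fin K → ℝ := fun k =>
      (g k (x (t + 1) k) + ⟪y (t + 1) k, x (t + 1) k - X0⟫
          + ρ k / 2 * ‖x (t + 1) k - X0‖ ^ 2)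
        - (g k (x t k) + ⟪y t k, x t k - X0⟫ + ρ k / 2 * ‖x t k - X0‖ ^ 2) with hD
    have hsplit : augL g h ρ (x (t + 1)) X0 (y (t + 1)) - augL g h ρ (x t) X0 (y t)
        = ∑ k, D k := by
      simp only [augL, hD, Finset.sum_sub_distrib, Finset.sum_add_distrib]
      ring
    have hzero : ∀ k ∈ Finset.univ, D k ≠ 0 → some k ∈ C (t + 1) := by
      intro k _ hne
      by_contra hk
      apply hne
      rw [hD]
      simp only
      rw [(hxupd t k).2 hk, (hyupd t k).2 hk, sub_self]
    have hbound : ∀ k ∈ Finset.univ.filter (fun k : Fin K => some k ∈ C (t + 1)),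
        D k ≤ (Lg k ^ 2 / ρ k - γ k / 2) * ‖x (t + 1) k - x t k‖ ^ 2 := by
      intro k hkf
      have hkC : some k ∈ C (t + 1) := (Finset.mem_filter.1 hkf).2
      set F : EuclideanSpace ℝ (Fin N) → ℝ := fun z =>
        g k z + ⟪y t k, z - X0⟫ + ρ k / 2 * ‖z - X0‖ ^ 2 with hF
      have hminF : ∀ z, F (x (t + 1) k) ≤ F z := (hxupd t k).1 hkC
      have hsc : StrongConvexOn Set.univ (γ k) F := strong_transfer (y t k) X0 (hstrong k)
      have hgap := strong_min_gap (le_of_lt (hγpos k)) hsc (Set.mem_univ _)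
        (fun z _ => hminF z) (Set.mem_univ (x t k))
      rw [norm_sub_rev (x t k)] at hgap
      have hyrel := (hyupd t k).1 hkC
      have hyp : y (t + 1) k = -(g' k (x (t + 1) k)) := hkey t k hkC
      have hyc : y t k = -(g' k (x t k)) := hyinv t ht k
      have hip : ⟪y (t + 1) k - y t k, x (t + 1) k - X0⟫
          = (1 / ρ k) * ‖y (t + 1) k - y t k‖ ^ 2 := by
        have hd : y (t + 1) k - y t k = ρ k • (x (t + 1) k - X0) := by
          rw [hyrel]; abel
        have hρ0 : ρ k ≠ 0 := (hρ k).ne'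
        rw [hd, real_inner_smul_left, real_inner_self_eq_norm_sq, norm_smul,
          Real.norm_eq_abs, abs_of_pos (hρ k), mul_pow]
        field_simp
      have hnormy : ‖y (t + 1) k - y t k‖ ≤ Lg k * ‖x (t + 1) k - x t k‖ := by
        have hrw : y (t + 1) k - y t k = -(g' k (x (t + 1) k) - g' k (x t k)) := by
          rw [hyp, hyc]; abel
        rw [hrw, norm_neg]
        exact hLip k _ _
      have hip_le : ⟪y (t + 1) k - y t k, x (t + 1) k - X0⟫
          ≤ Lg k ^ 2 / ρ k * ‖x (t + 1) k - x t k‖ ^ 2 := by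
        rw [hip]
        have h1 : ‖y (t + 1) k - y t k‖ ^ 2 ≤ (Lg k * ‖x (t + 1) k - x t k‖) ^ 2 :=
          pow_le_pow_left₀ (norm_nonneg _) hnormy 2
        have h2 : (0:ℝ) < ρ k := hρ k
        rw [mul_pow] at h1
        calc (1 / ρ k) * ‖y (t + 1) k - y t k‖ ^ 2
            ≤ (1 / ρ k) * (Lg k ^ 2 * ‖x (t + 1) k - x t k‖ ^ 2) :=
              mul_le_mul_of_nonneg_left h1 (by positivity)
          _ = Lg k ^ 2 / ρ k * ‖x (t + 1) k - x t k‖ ^ 2 := by ring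
      have hDk : D k = (F (x (t + 1) k) - F (x t k))
          + ⟪y (t + 1) k - y t k, x (t + 1) k - X0⟫ := by
        rw [hD, hF]
        simp only [inner_sub_left]
        ring
      rw [hDk]
      have hgap' : F (x (t + 1) k) - F (x t k)
          ≤ -(γ k / 2 * ‖x (t + 1) k - x t k‖ ^ 2) := by linarith
      calc (F (x (t + 1) k) - F (x t k)) + ⟪y (t + 1) k - y t k, x (t + 1) k - X0⟫
          ≤ -(γ k / 2 * ‖x (t + 1) k - x t k‖ ^ 2)
            + Lg k ^ 2 / ρ k * ‖x (t + 1) k - x t k‖ ^ 2 := add_le_add hgap' hip_le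
        _ = (Lg k ^ 2 / ρ k - γ k / 2) * ‖x (t + 1) k - x t k‖ ^ 2 := by ring
    calc augL g h ρ (x (t + 1)) X0 (y (t + 1)) - augL g h ρ (x t) X0 (y t)
        = ∑ k, D k := hsplit
      _ = ∑ k ∈ Finset.univ.filter (fun k : Fin K => some k ∈ C (t + 1)), D k :=
          (Finset.sum_filter_of_ne hzero).symm
      _ ≤ ∑ k ∈ Finset.univ.filter (fun k : Fin K => some k ∈ C (t + 1)),
            (Lg k ^ 2 / ρ k - γ k / 2) * ‖x (t + 1) k - x t k‖ ^ 2 :=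
          Finset.sum_le_sum hbound
  calc augL g h ρ (x (t + 1)) (x0 (t + 1)) (y (t + 1)) - augL g h ρ (x t) (x0 t) (y t)
      = (augL g h ρ (x (t + 1)) (x0 (t + 1)) (y (t + 1))
          - augL g h ρ (x t) (x0 (t + 1)) (y t))
        + (augL g h ρ (x t) (x0 (t + 1)) (y t) - augL g h ρ (x t) (x0 t) (y t)) := by ring
    _ ≤ (∑ k ∈ Finset.univ.filter (fun k : Fin K => some k ∈ C (t + 1)),
            (Lg k ^ 2 / ρ k - γ k / 2) * ‖x (t + 1) k - x t k‖ ^ 2)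
        + -(S / 2 * ‖x0 (t + 1) - x0 t‖ ^ 2) := add_le_add part2 part1
    _ = (∑ k ∈ Finset.univ.filter (fun k : Fin K => some k ∈ C (t + 1)),
            (Lg k ^ 2 / ρ k - γ k / 2) * ‖x (t + 1) k - x t k‖ ^ 2)
        - S / 2 * ‖x0 (t + 1) - x0 t‖ ^ 2 := by ring
end

section
/- (Lemma 2.3) Let the sequences {x_k^t}, {x_0^t}, {y_k^t} be generated by the flexible ADMM (Algorithm 2) for the consensus problem, with an arbitrary choice of index sets C^{t+1}, and suppose Assumptions A1, A2, A3 hold. Then for every t ≥ 1: L({x_k^{t+1}}, x_0^{t+1}; y^{t+1}) ≥ f(x_0^{t+1}) ≥ f̄. Consequently, under the period-T essentially cyclic rule the sequence t ↦ L({x_k^t}, x_0^t; y^t) is nonincreasing for t ≥ 1 and converges to a limit that is greater than or equal to f̄. -/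
open Filter
open scoped RealInnerProductSpace BigOperators

section MyAux
set_option linter.unusedSectionVars false
variable {E : Type*} [NormedAddCommGroup E] [InnerProductSpace ℝ E] [CompleteSpace E]

/-- Descent lemma. -/
lemma my_descent {g : E → ℝ} {g' : E → E} {L : ℝ} (hL : 0 ≤ L)
    (hgrad : ∀ z, HasGradientAt g (g' z) z)
    (hLip : ∀ u v, ‖g' u - g' v‖ ≤ L * ‖u - v‖) (u v : E) :
    g v ≤ g u + ⟪g' u, v - u⟫ + L / 2 * ‖v - u‖ ^ 2 := by
  set w := v - u with hw
  have hline : ∀ t : ℝ, HasDerivAt (fun s : ℝ => g (u + s • w)) ⟪g' (u + t • w), w⟫ t := by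
    intro t
    have h1 : HasDerivAt (fun s : ℝ => u + s • w) w t := by
      simpa using ((hasDerivAt_id t).smul_const w).const_add u
    have h2 := (hgrad (u + t • w)).hasFDerivAt
    have := h2.comp_hasDerivAt t h1
    simp [InnerProductSpace.toDual_apply_apply] at this; exact this
  have hgcont : Continuous fun t : ℝ => g' (u + t • w) := by
    have : LipschitzWith (Real.toNNReal L) g' := by
      apply LipschitzWith.of_dist_le_mul
      intro a b
      simpa [dist_eq_norm, Real.coe_toNNReal L hL] using hLip a b
    exact this.continuous.comp (by continuity)
  have hcont : Continuous fun t : ℝ => ⟪g' (u + t • w), w⟫ :=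
    hgcont.inner continuous_const
  have hint0 := intervalIntegral.integral_eq_sub_of_hasDerivAt (fun t (_ : t ∈ Set.uIcc (0:ℝ) 1) => hline t)
      (hcont.intervalIntegrable 0 1)
  have hint : g v - g u = ∫ t in (0:ℝ)..1, ⟪g' (u + t • w), w⟫ := by
    rw [hint0]
    have e1 : u + (1:ℝ) • w = v := by simp [hw]
    have e2 : u + (0:ℝ) • w = u := by simp
    rw [e1, e2]
  have hbound : ∀ t ∈ Set.Icc (0:ℝ) 1, ⟪g' (u + t • w), w⟫ ≤ ⟪g' u, w⟫ + L * t * ‖w‖ ^ 2 := by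
    intro t ht
    have h1 : ⟪g' (u + t • w) - g' u, w⟫ ≤ ‖g' (u + t • w) - g' u‖ * ‖w‖ :=
      real_inner_le_norm _ _
    have h2 : ‖g' (u + t • w) - g' u‖ ≤ L * (t * ‖w‖) := by
      have := hLip (u + t • w) u
      simpa [norm_smul, abs_of_nonneg ht.1, mul_assoc] using this
    have h3 : ⟪g' (u + t • w) - g' u, w⟫ ≤ L * t * ‖w‖ ^ 2 := by
      calc ⟪g' (u + t • w) - g' u, w⟫ ≤ ‖g' (u + t • w) - g' u‖ * ‖w‖ := h1
        _ ≤ L * (t * ‖w‖) * ‖w‖ := by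
            apply mul_le_mul_of_nonneg_right h2 (norm_nonneg _)
        _ = L * t * ‖w‖ ^ 2 := by ring
    have := inner_sub_left (𝕜 := ℝ) (g' (u + t • w)) (g' u) w
    linarith [this ▸ h3]
  have hmono : (∫ t in (0:ℝ)..1, ⟪g' (u + t • w), w⟫)
      ≤ ∫ t in (0:ℝ)..1, (⟪g' u, w⟫ + L * t * ‖w‖ ^ 2) := by
    apply intervalIntegral.integral_mono_on (by norm_num)
      (hcont.intervalIntegrable 0 1)
      (by apply Continuous.intervalIntegrable; continuity)
    exact hbound
  have hval : (∫ t in (0:ℝ)..1, (⟪g' u, w⟫ + L * t * ‖w‖ ^ 2)) = ⟪g' u, w⟫ + L / 2 * ‖w‖ ^ 2 := by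
    have h1 : (∫ t in (0:ℝ)..1, (⟪g' u, w⟫ + L * t * ‖w‖ ^ 2))
        = (∫ _ in (0:ℝ)..1, ⟪g' u, w⟫) + ∫ t in (0:ℝ)..1, L * t * ‖w‖ ^ 2 := by
      apply intervalIntegral.integral_add intervalIntegrable_const
      apply Continuous.intervalIntegrable; continuity
    have h2 : (∫ t in (0:ℝ)..1, L * t * ‖w‖ ^ 2)
        = (L * ‖w‖ ^ 2) * ∫ t in (0:ℝ)..1, t := by
      rw [← intervalIntegral.integral_const_mul]
      congr 1; funext t; ring
    rw [h1, h2]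
    rw [integral_id]
    simp
    ring
  have hend : g v - g u ≤ ⟪g' u, w⟫ + L / 2 * ‖w‖ ^ 2 := by
    rw [hint]; rw [hval] at hmono; exact hmono
  linarith

/-- Gradient of the subproblem objective. -/
lemma my_subgrad {g : E → ℝ} {g' : E → E} (hg : ∀ z, HasGradientAt g (g' z) z)
    (y x0 : E) (ρ : ℝ) (a : E) :
    HasGradientAt (fun z => g z + ⟪y, z - x0⟫ + ρ / 2 * ‖z - x0‖ ^ 2)
      (g' a + y + ρ • (a - x0)) a := by
  rw [hasGradientAt_iff_hasFDerivAt]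
  have h1 : HasFDerivAt g ((InnerProductSpace.toDual ℝ E) (g' a)) a :=
    (hg a).hasFDerivAt
  have h2 : HasFDerivAt (fun z : E => ⟪y, z - x0⟫) (innerSL ℝ y) a := by
    have : HasFDerivAt (fun z : E => z - x0) (ContinuousLinearMap.id ℝ E) a :=
      (hasFDerivAt_id a).sub_const x0
    have h := (innerSL ℝ y).hasFDerivAt.comp a this
    simp at h; exact h
  have h3 : HasFDerivAt (fun z : E => ‖z - x0‖ ^ 2) (2 • (innerSL ℝ (a - x0))) a := by
    have hid : HasFDerivAt (fun z : E => z - x0) (ContinuousLinearMap.id ℝ E) a :=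
      (hasFDerivAt_id a).sub_const x0
    have := hid.inner ℝ hid
    have heq : (fun z : E => ⟪z - x0, z - x0⟫) = fun z : E => ‖z - x0‖ ^ 2 := by
      funext z; rw [real_inner_self_eq_norm_sq]
    rw [heq] at this
    refine this.congr_fderiv ?_
    apply ContinuousLinearMap.ext
    intro v
    simp [two_smul, inner_sub_right, inner_sub_left, real_inner_comm]
  have := (h1.add h2).add ((h3.const_mul (ρ / 2)))
  refine this.congr_fderiv ?_
  apply ContinuousLinearMap.ext
  intro v
  simp [InnerProductSpace.toDual_apply_apply, inner_add_left, inner_smul_left, real_inner_comm]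
  ring

lemma my_stationary {g : E → ℝ} {g' : E → E} (hg : ∀ z, HasGradientAt g (g' z) z)
    (y x0 a : E) (ρ : ℝ)
    (hmin : ∀ z, g a + ⟪y, a - x0⟫ + ρ / 2 * ‖a - x0‖ ^ 2
      ≤ g z + ⟪y, z - x0⟫ + ρ / 2 * ‖z - x0‖ ^ 2) :
    y + ρ • (a - x0) = -g' a := by
  have hloc : IsLocalMin (fun z => g z + ⟪y, z - x0⟫ + ρ / 2 * ‖z - x0‖ ^ 2) a :=
    IsMinOn.isLocalMin (fun z _ => hmin z) Filter.univ_mem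
  have hfd := (hasGradientAt_iff_hasFDerivAt.mp (my_subgrad hg y x0 ρ a))
  have h0 := hloc.hasFDerivAt_eq_zero hfd
  have hz : g' a + y + ρ • (a - x0) = 0 := by
    apply (InnerProductSpace.toDual ℝ E).injective
    rw [map_zero]; exact h0
  rw [add_assoc] at hz
  exact eq_neg_of_add_eq_zero_right hz

lemma my_decomp (g : E → ℝ) (ρ : ℝ) (y x0 u : E) :
    g u + ⟪y, u - x0⟫ + ρ / 2 * ‖u - x0‖ ^ 2
      = (g u + ρ / 2 * ‖u‖ ^ 2) + ⟪y - ρ • x0, u⟫ + (ρ / 2 * ‖x0‖ ^ 2 - ⟪y, x0⟫) := by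
  have h1 : ‖u - x0‖ ^ 2 = ‖u‖ ^ 2 - 2 * ⟪u, x0⟫ + ‖x0‖ ^ 2 := by
    exact norm_sub_sq_real u x0
  rw [h1, inner_sub_right, inner_sub_left, real_inner_smul_left, real_inner_comm x0 u]
  ring

lemma my_growth {g : E → ℝ} {γ ρ : ℝ} (hγ : 0 ≤ γ)
    (hstrong : StrongConvexOn Set.univ γ (fun z => g z + ρ / 2 * ‖z‖ ^ 2))
    (y x0 a : E)
    (hmin : ∀ z, g a + ⟪y, a - x0⟫ + ρ / 2 * ‖a - x0‖ ^ 2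
      ≤ g z + ⟪y, z - x0⟫ + ρ / 2 * ‖z - x0‖ ^ 2) (z : E) :
    (g a + ⟪y, a - x0⟫ + ρ / 2 * ‖a - x0‖ ^ 2) + γ / 2 * ‖z - a‖ ^ 2
      ≤ g z + ⟪y, z - x0⟫ + ρ / 2 * ‖z - x0‖ ^ 2 := by
  have hc0 : 0 ≤ γ / 2 * ‖z - a‖ ^ 2 := by positivity
  have hkey : ∀ θ : ℝ, 0 < θ → θ ≤ 1 →
      (g a + ⟪y, a - x0⟫ + ρ / 2 * ‖a - x0‖ ^ 2) + (1 - θ) * (γ / 2 * ‖z - a‖ ^ 2)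
        ≤ g z + ⟪y, z - x0⟫ + ρ / 2 * ‖z - x0‖ ^ 2 := by
    intro θ hθ0 hθ1
    have hcomb := hstrong.2 (Set.mem_univ z) (Set.mem_univ a)
      (le_of_lt hθ0) (by linarith : (0:ℝ) ≤ 1 - θ) (by ring)
    simp only [smul_eq_mul] at hcomb
    have hdz := my_decomp g ρ y x0 z
    have hda := my_decomp g ρ y x0 a
    have hdm := my_decomp g ρ y x0 (θ • z + (1 - θ) • a)
    have hlin : ⟪y - ρ • x0, θ • z + (1 - θ) • a⟫
        = θ * ⟪y - ρ • x0, z⟫ + (1 - θ) * ⟪y - ρ • x0, a⟫ := by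
      rw [inner_add_right, real_inner_smul_right, real_inner_smul_right]
    have hmle := hmin (θ • z + (1 - θ) • a)
    nlinarith [hcomb, hdz, hda, hdm, hlin, hmle]
  have hfin : ∀ ε : ℝ, 0 < ε →
      (g a + ⟪y, a - x0⟫ + ρ / 2 * ‖a - x0‖ ^ 2) + γ / 2 * ‖z - a‖ ^ 2
        ≤ (g z + ⟪y, z - x0⟫ + ρ / 2 * ‖z - x0‖ ^ 2) + ε := by
    intro ε hε
    set c : ℝ := γ / 2 * ‖z - a‖ ^ 2 with hcdef
    set θ : ℝ := min 1 (ε / (c + 1)) with hθ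
    have hθ0 : 0 < θ := lt_min one_pos (by positivity)
    have hθ1 : θ ≤ 1 := min_le_left _ _
    have h := hkey θ hθ0 hθ1
    have hθc : θ * c ≤ ε := by
      have h1 : θ ≤ ε / (c + 1) := min_le_right _ _
      have h2 : θ * c ≤ (ε / (c + 1)) * c := by nlinarith
      have h3 : (ε / (c + 1)) * c ≤ ε := by
        rw [div_mul_eq_mul_div, div_le_iff₀ (by linarith)]
        nlinarith
      linarith
    nlinarith [h, hθc, hc0]
  linarith [le_of_forall_pos_le_add hfin]

end MyAux

/-- **Lemma 2.3.**  For the flexible ADMM (Algorithm 2) on the consensus problem, under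
Assumptions A1–A3, for every `t ≥ 1` the augmented Lagrangian satisfies
`L({x^{t+1}}, x_0^{t+1}; y^{t+1}) ≥ f(x_0^{t+1}) ≥ f̄`; consequently, under the period-`T`
essentially cyclic rule, `t ↦ L({x^t}, x_0^t; y^t)` is nonincreasing for `t ≥ 1` and converges
to a limit `≥ f̄`, where `f̄ = inf_{z ∈ X} f(z)`. -/
theorem lemma2_3
    {N K : ℕ} (hK : 1 ≤ K)
    (g : Fin K → EuclideanSpace ℝ (Fin N) → ℝ)
    (g' : Fin K → EuclideanSpace ℝ (Fin N) → EuclideanSpace ℝ (Fin N))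
    (h : EuclideanSpace ℝ (Fin N) → ℝ)
    (X : Set (EuclideanSpace ℝ (Fin N)))
    (Lg ρ γ : Fin K → ℝ)
    (x : ℕ → Fin K → EuclideanSpace ℝ (Fin N))
    (x0 : ℕ → EuclideanSpace ℝ (Fin N))
    (y : ℕ → Fin K → EuclideanSpace ℝ (Fin N))
    (C : ℕ → Finset (Option (Fin K)))
    -- Assumption A1
    (hgrad : ∀ k z, HasGradientAt (g k) (g' k z) z)
    (hLpos : ∀ k, 0 < Lg k)
    (hLip : ∀ k u v, ‖g' k u - g' k v‖ ≤ Lg k * ‖u - v‖)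
    (hconv : ConvexOn ℝ Set.univ h)
    (hXne : X.Nonempty) (hXcl : IsClosed X) (hXcv : Convex ℝ X)
    (hρ : ∀ k, 0 < ρ k)
    -- Assumption A2
    (hγpos : ∀ k, 0 < γ k)
    (hstrong : ∀ k, StrongConvexOn Set.univ (γ k)
      (fun z : EuclideanSpace ℝ (Fin N) => g k z + ρ k / 2 * ‖z‖ ^ 2))
    (hA2b : ∀ k, 2 * Lg k ^ 2 < ρ k * γ k)
    (hA2c : ∀ k, Lg k ≤ ρ k)
    -- Assumption A3 : `f` is bounded below over `X`
    (hbdd : BddBelow ((fun z => (∑ k, g k z) + h z) '' X))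
    -- Algorithm 2
    (hC1 : C 1 = Finset.univ)
    (hx0upd : ∀ t : ℕ,
      (none ∈ C (t + 1) → x0 (t + 1) ∈ X ∧ ∀ z ∈ X,
        augL g h ρ (x t) (x0 (t + 1)) (y t) ≤ augL g h ρ (x t) z (y t)) ∧
      (none ∉ C (t + 1) → x0 (t + 1) = x0 t))
    (hxupd : ∀ (t : ℕ) (k : Fin K),
      (some k ∈ C (t + 1) → ∀ z : EuclideanSpace ℝ (Fin N),
        g k (x (t + 1) k) + ⟪y t k, x (t + 1) k - x0 (t + 1)⟫
            + ρ k / 2 * ‖x (t + 1) k - x0 (t + 1)‖ ^ 2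
          ≤ g k z + ⟪y t k, z - x0 (t + 1)⟫ + ρ k / 2 * ‖z - x0 (t + 1)‖ ^ 2) ∧
      (some k ∉ C (t + 1) → x (t + 1) k = x t k))
    (hyupd : ∀ (t : ℕ) (k : Fin K),
      (some k ∈ C (t + 1) → y (t + 1) k = y t k + ρ k • (x (t + 1) k - x0 (t + 1))) ∧
      (some k ∉ C (t + 1) → y (t + 1) k = y t k))
    :
    (∀ t : ℕ, 1 ≤ t →
      sInf ((fun z => (∑ k, g k z) + h z) '' X)
          ≤ (∑ k, g k (x0 (t + 1))) + h (x0 (t + 1)) ∧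
      (∑ k, g k (x0 (t + 1))) + h (x0 (t + 1))
          ≤ augL g h ρ (x (t + 1)) (x0 (t + 1)) (y (t + 1))) ∧
    (∀ T : ℕ, 1 ≤ T →
      (∀ (t : ℕ) (j : Option (Fin K)), ∃ i, 1 ≤ i ∧ i ≤ T ∧ j ∈ C (t + i)) →
      (∀ t : ℕ, 1 ≤ t →
        augL g h ρ (x (t + 1)) (x0 (t + 1)) (y (t + 1))
          ≤ augL g h ρ (x t) (x0 t) (y t)) ∧
      ∃ Lc : ℝ, sInf ((fun z => (∑ k, g k z) + h z) '' X) ≤ Lc ∧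
        Tendsto (fun t => augL g h ρ (x t) (x0 t) (y t)) atTop (nhds Lc)) := by
  -- membership of x0 in X for t ≥ 1
  have hX0 : ∀ t : ℕ, 1 ≤ t → x0 t ∈ X := by
    intro t
    induction t with
    | zero => omega
    | succ n ih =>
      intro _
      by_cases h0 : none ∈ C (n + 1)
      · exact ((hx0upd n).1 h0).1
      · have hn : 1 ≤ n := by
          rcases Nat.eq_zero_or_pos n with h' | h'
          · exfalso; subst h'; exact h0 (by rw [hC1]; exact Finset.mem_univ _)
          · exact h'
        rw [(hx0upd n).2 h0]
        exact ih hn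
  -- dual variables are gradients for t ≥ 1
  have hY : ∀ t : ℕ, 1 ≤ t → ∀ k, y t k = - g' k (x t k) := by
    intro t
    induction t with
    | zero => omega
    | succ n ih =>
      intro _ k
      by_cases hk : some k ∈ C (n + 1)
      · have hmin := (hxupd n k).1 hk
        have hst := my_stationary (hgrad k) (y n k) (x0 (n + 1)) (x (n + 1) k) (ρ k) hmin
        rw [(hyupd n k).1 hk]
        exact hst
      · have hn : 1 ≤ n := by
          rcases Nat.eq_zero_or_pos n with h' | h'
          · exfalso; subst h'; exact hk (by rw [hC1]; exact Finset.mem_univ _)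
          · exact h'
        rw [(hyupd n k).2 hk, (hxupd n k).2 hk]
        exact ih hn k
  -- Claim 1 : f(x0 s) ≤ L^s for s ≥ 1
  have claim1 : ∀ s : ℕ, 1 ≤ s →
      (∑ k, g k (x0 s)) + h (x0 s) ≤ augL g h ρ (x s) (x0 s) (y s) := by
    intro s hs
    have per_k : ∀ k : Fin K, g k (x0 s)
        ≤ g k (x s k) + ⟪y s k, x s k - x0 s⟫ + ρ k / 2 * ‖x s k - x0 s‖ ^ 2 := by
      intro k
      have hdes := my_descent (le_of_lt (hLpos k)) (hgrad k) (hLip k) (x s k) (x0 s)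
      have hswap : ⟪g' k (x s k), x0 s - x s k⟫ = ⟪y s k, x s k - x0 s⟫ := by
        rw [hY s hs k, inner_neg_left, ← inner_neg_right, neg_sub]
      have hnormswap : ‖x0 s - x s k‖ = ‖x s k - x0 s‖ := norm_sub_rev _ _
      rw [hswap, hnormswap] at hdes
      have hq := mul_le_mul_of_nonneg_right (hA2c k) (sq_nonneg ‖x s k - x0 s‖)
      linarith
    have hsum := Finset.sum_le_sum (fun k (_ : k ∈ Finset.univ) => per_k k)
    rw [Finset.sum_add_distrib, Finset.sum_add_distrib] at hsum
    simp only [augL]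
    linarith
  -- Claim 0 : f̄ ≤ f(x0 s) for s ≥ 1
  have claim0 : ∀ s : ℕ, 1 ≤ s →
      sInf ((fun z => (∑ k, g k z) + h z) '' X) ≤ (∑ k, g k (x0 s)) + h (x0 s) := by
    intro s hs
    exact csInf_le hbdd (Set.mem_image_of_mem _ (hX0 s hs))
  -- Claim 2 : monotone decrease for t ≥ 1
  have claim2 : ∀ t : ℕ, 1 ≤ t →
      augL g h ρ (x (t + 1)) (x0 (t + 1)) (y (t + 1)) ≤ augL g h ρ (x t) (x0 t) (y t) := by
    intro t ht
    have hA : augL g h ρ (x t) (x0 (t + 1)) (y t) ≤ augL g h ρ (x t) (x0 t) (y t) := by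
      by_cases h0 : none ∈ C (t + 1)
      · exact ((hx0upd t).1 h0).2 (x0 t) (hX0 t ht)
      · rw [(hx0upd t).2 h0]
    have hBk : ∀ k : Fin K,
        g k (x (t + 1) k) + ⟪y (t + 1) k, x (t + 1) k - x0 (t + 1)⟫
            + ρ k / 2 * ‖x (t + 1) k - x0 (t + 1)‖ ^ 2
          ≤ g k (x t k) + ⟪y t k, x t k - x0 (t + 1)⟫
            + ρ k / 2 * ‖x t k - x0 (t + 1)‖ ^ 2 := by
      intro k
      by_cases hk : some k ∈ C (t + 1)
      · have hmin := (hxupd t k).1 hk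
        have key := my_growth (le_of_lt (hγpos k)) (hstrong k) (y t k) (x0 (t + 1))
          (x (t + 1) k) hmin (x t k)
        rw [norm_sub_rev (x t k) (x (t + 1) k)] at key
        have hyt1 : y (t + 1) k = y t k + ρ k • (x (t + 1) k - x0 (t + 1)) := (hyupd t k).1 hk
        have hy1 : y (t + 1) k = - g' k (x (t + 1) k) := hY (t + 1) (by omega) k
        have hy0 : y t k = - g' k (x t k) := hY t ht k
        have hinner : ⟪y (t + 1) k, x (t + 1) k - x0 (t + 1)⟫
            = ⟪y t k, x (t + 1) k - x0 (t + 1)⟫ + ρ k * ‖x (t + 1) k - x0 (t + 1)‖ ^ 2 := by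
          rw [hyt1, inner_add_left, real_inner_smul_left, real_inner_self_eq_norm_sq]
        have hdiff : y (t + 1) k - y t k = ρ k • (x (t + 1) k - x0 (t + 1)) := by
          rw [hyt1]; abel
        have hdiff2 : ‖y (t + 1) k - y t k‖ ≤ Lg k * ‖x (t + 1) k - x t k‖ := by
          have h1 : y (t + 1) k - y t k = g' k (x t k) - g' k (x (t + 1) k) := by
            rw [hy1, hy0]; abel
          rw [h1]
          calc ‖g' k (x t k) - g' k (x (t + 1) k)‖ ≤ Lg k * ‖x t k - x (t + 1) k‖ := hLip k _ _
            _ = Lg k * ‖x (t + 1) k - x t k‖ := by rw [norm_sub_rev]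
        have hρk := hρ k
        have e1 : ‖y (t + 1) k - y t k‖ ^ 2 = ρ k ^ 2 * ‖x (t + 1) k - x0 (t + 1)‖ ^ 2 := by
          rw [hdiff, norm_smul, mul_pow, Real.norm_eq_abs, sq_abs]
        have e2 : ‖y (t + 1) k - y t k‖ ^ 2 ≤ (Lg k * ‖x (t + 1) k - x t k‖) ^ 2 :=
          pow_le_pow_left₀ (norm_nonneg _) hdiff2 2
        have hρn : ρ k * ‖x (t + 1) k - x0 (t + 1)‖ ^ 2
            ≤ Lg k ^ 2 / ρ k * ‖x (t + 1) k - x t k‖ ^ 2 := by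
          rw [div_mul_eq_mul_div, le_div_iff₀ hρk]
          nlinarith [e1, e2]
        have hcoef : Lg k ^ 2 / ρ k * ‖x (t + 1) k - x t k‖ ^ 2
            ≤ γ k / 2 * ‖x (t + 1) k - x t k‖ ^ 2 := by
          have hc : Lg k ^ 2 / ρ k ≤ γ k / 2 := by
            rw [div_le_div_iff₀ hρk two_pos]
            nlinarith [hA2b k]
          exact mul_le_mul_of_nonneg_right hc (sq_nonneg _)
        rw [hinner]
        linarith
      · rw [(hxupd t k).2 hk, (hyupd t k).2 hk]
    have hB : augL g h ρ (x (t + 1)) (x0 (t + 1)) (y (t + 1))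
        ≤ augL g h ρ (x t) (x0 (t + 1)) (y t) := by
      have hsum := Finset.sum_le_sum (fun k (_ : k ∈ Finset.univ) => hBk k)
      rw [Finset.sum_add_distrib, Finset.sum_add_distrib,
        Finset.sum_add_distrib, Finset.sum_add_distrib] at hsum
      simp only [augL]
      linarith
    exact le_trans hB hA
  refine ⟨fun t ht => ⟨claim0 (t + 1) (by omega), claim1 (t + 1) (by omega)⟩, ?_⟩
  intro T _ _
  refine ⟨claim2, ?_⟩
  set a : ℕ → ℝ := fun n => augL g h ρ (x (n + 2)) (x0 (n + 2)) (y (n + 2)) with ha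
  have hanti : Antitone a := by
    apply antitone_nat_of_succ_le
    intro n
    exact claim2 (n + 2) (by omega)
  have hlb : ∀ n : ℕ, sInf ((fun z => (∑ k, g k z) + h z) '' X) ≤ a n := fun n =>
    le_trans (claim0 (n + 2) (by omega)) (claim1 (n + 2) (by omega))
  have hbd : BddBelow (Set.range a) :=
    ⟨sInf ((fun z => (∑ k, g k z) + h z) '' X), by rintro _ ⟨n, rfl⟩; exact hlb n⟩
  have htendsto : Tendsto a atTop (nhds (⨅ n, a n)) := tendsto_atTop_ciInf hanti hbd
  refine ⟨⨅ n, a n, le_ciInf hlb, ?_⟩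
  exact (tendsto_add_atTop_iff_nat 2).mp htendsto
end

section
/- (Theorem 2.1, part 1) Let the sequences {x_k^t}, {x_0^t}, {y_k^t} be generated by the flexible ADMM (Algorithm 2) for the consensus problem under the period-T essentially cyclic rule, and suppose Assumptions A1, A2, A3 hold. Then lim_{t→∞} ‖x_k^{t+1} − x_0^{t+1}‖ = 0 for every k = 1,…,K; moreover lim_{t→∞} ‖x_k^{t+1} − x_k^t‖ = 0, lim_{t→∞} ‖x_0^{t+1} − x_0^t‖ = 0, and lim_{t→∞} ‖y_k^{t+1} − y_k^t‖ = 0 for every k. -/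
open Filter
open scoped RealInnerProductSpace BigOperators

section Aux
variable {E : Type*} [NormedAddCommGroup E] [InnerProductSpace ℝ E]

/-- combination identity for squared norms -/
lemma admm_comb_norm_sq (a b : ℝ) (hab : a + b = 1) (u v : E) :
    ‖a • u + b • v‖ ^ 2 = a * ‖u‖ ^ 2 + b * ‖v‖ ^ 2 - a * b * ‖u - v‖ ^ 2 := by
  have h4 : ‖u - v‖ ^ 2 = ‖u‖ ^ 2 - 2 * ⟪u, v⟫ + ‖v‖ ^ 2 := norm_sub_sq_real u v
  have h1 : ‖a • u + b • v‖ ^ 2 = ⟪a • u + b • v, a • u + b • v⟫ := (real_inner_self_eq_norm_sq _).symm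
  have h2 : ‖u‖ ^ 2 = ⟪u, u⟫ := (real_inner_self_eq_norm_sq _).symm
  have h3 : ‖v‖ ^ 2 = ⟪v, v⟫ := (real_inner_self_eq_norm_sq _).symm
  have hc : ⟪u, v⟫ = ⟪v, u⟫ := real_inner_comm v u
  have hb : b = 1 - a := by linarith
  subst hb
  rw [h4, h1]
  simp only [inner_add_add_self, real_inner_smul_left, real_inner_smul_right]
  rw [← h2, ← h3, ← hc]
  ring

end Aux

section Aux2
variable {E : Type*} [NormedAddCommGroup E] [InnerProductSpace ℝ E]

/-- limit argument: strongly-convex-type inequality plus minimality gives quadratic growth -/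
lemma admm_strong_min_base (F : E → ℝ) (m : ℝ) (xs z : E)
    (hineq : ∀ b : ℝ, 0 < b → b < 1 →
      F ((1 - b) • xs + b • z) ≤ (1 - b) * F xs + b * F z - (1 - b) * b * (m / 2 * ‖xs - z‖ ^ 2))
    (hmin : ∀ b : ℝ, 0 < b → b < 1 → F xs ≤ F ((1 - b) • xs + b • z)) :
    F xs + m / 2 * ‖z - xs‖ ^ 2 ≤ F z := by
  have key : ∀ n : ℕ, (1 - 1 / ((n : ℝ) + 2)) * (m / 2 * ‖xs - z‖ ^ 2) ≤ F z - F xs := by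
    intro n
    set b : ℝ := 1 / ((n : ℝ) + 2) with hbdef
    have hn2 : (0 : ℝ) < (n : ℝ) + 2 := by positivity
    have hb0 : 0 < b := by positivity
    have hb1 : b < 1 := by
      rw [hbdef, div_lt_one hn2]; linarith
    have h1 := hineq b hb0 hb1
    have h2 := hmin b hb0 hb1
    have h3 : F xs ≤ (1 - b) * F xs + b * F z - (1 - b) * b * (m / 2 * ‖xs - z‖ ^ 2) :=
      le_trans h2 h1
    have h4 : b * ((1 - b) * (m / 2 * ‖xs - z‖ ^ 2)) ≤ b * (F z - F xs) := by nlinarith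
    have := (mul_le_mul_iff_right₀ hb0).mp h4
    linarith
  have hlim : Tendsto (fun n : ℕ => (1 - 1 / ((n : ℝ) + 2)) * (m / 2 * ‖xs - z‖ ^ 2))
      atTop (nhds (m / 2 * ‖xs - z‖ ^ 2)) := by
    have h0 : Tendsto (fun n : ℕ => 1 / ((n : ℝ) + 2)) atTop (nhds 0) := by
      simp only [one_div]
      exact Tendsto.comp tendsto_inv_atTop_zero
        (Tendsto.atTop_add tendsto_natCast_atTop_atTop tendsto_const_nhds)
    have := ((tendsto_const_nhds (x := (1:ℝ))).sub h0).mul_const (m / 2 * ‖xs - z‖ ^ 2)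
    simpa using this
  have hle : m / 2 * ‖xs - z‖ ^ 2 ≤ F z - F xs := le_of_tendsto hlim (Eventually.of_forall key)
  rw [norm_sub_rev] at hle
  linarith

end Aux2

section Aux3
variable {E : Type*} [NormedAddCommGroup E] [InnerProductSpace ℝ E]

/-- minimality of strongly convex + linear function on a convex set gives quadratic growth -/
lemma admm_strong_min (s : Set E) (G : E → ℝ) (m : ℝ)
    (hG : StrongConvexOn s m G) (v : E) (xs : E) (hxs : xs ∈ s)
    (hmin : ∀ z ∈ s, G xs + ⟪v, xs⟫ ≤ G z + ⟪v, z⟫) (z : E) (hz : z ∈ s) :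
    G xs + ⟪v, xs⟫ + m / 2 * ‖z - xs‖ ^ 2 ≤ G z + ⟪v, z⟫ := by
  set F : E → ℝ := fun w => G w + ⟪v, w⟫ with hF
  have hmem : ∀ b : ℝ, 0 < b → b < 1 → (1 - b) • xs + b • z ∈ s := fun b hb0 hb1 =>
    hG.1 hxs hz (by linarith) (le_of_lt hb0) (by ring)
  have hineq : ∀ b : ℝ, 0 < b → b < 1 →
      F ((1 - b) • xs + b • z) ≤ (1 - b) * F xs + b * F z - (1 - b) * b * (m / 2 * ‖xs - z‖ ^ 2) := by
    intro b hb0 hb1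
    have hGc := hG.2 hxs hz (by linarith : (0:ℝ) ≤ 1 - b) (le_of_lt hb0) (by ring)
    have hvc : ⟪v, (1 - b) • xs + b • z⟫ = (1 - b) * ⟪v, xs⟫ + b * ⟪v, z⟫ := by
      rw [inner_add_right, real_inner_smul_right, real_inner_smul_right]
    simp only [hF, smul_eq_mul] at hGc ⊢
    rw [hvc]
    linarith
  have hmin' : ∀ b : ℝ, 0 < b → b < 1 → F xs ≤ F ((1 - b) • xs + b • z) := fun b hb0 hb1 =>
    hmin _ (hmem b hb0 hb1)
  exact admm_strong_min_base F m xs z hineq hmin'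

end Aux3

section Aux4
variable {E : Type*} [NormedAddCommGroup E] [InnerProductSpace ℝ E] [CompleteSpace E]

open InnerProductSpace in
/-- the gradient of the subproblem objective -/
lemma admm_subprob_fderiv (g : E → ℝ) (g' : E → E) (hgrad : ∀ z, HasGradientAt g (g' z) z)
    (yk c : E) (ρk : ℝ) (xs : E) :
    HasFDerivAt (fun z => g z + ⟪yk, z - c⟫ + ρk / 2 * ‖z - c‖ ^ 2)
      (toDual ℝ E (g' xs + yk + ρk • (xs - c))) xs := by
  have hg : HasFDerivAt g (toDual ℝ E (g' xs)) xs := (hgrad xs).hasFDerivAt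
  have h2 : HasFDerivAt (fun z : E => ⟪yk, z - c⟫) (toDual ℝ E yk) xs := by
    have : HasFDerivAt (fun z : E => ⟪yk, z⟫ - ⟪yk, c⟫) (toDual ℝ E yk) xs := by
      have hlin : HasFDerivAt (fun z : E => ⟪yk, z⟫)
          ((toDual ℝ E yk : E →L[ℝ] ℝ)) xs := (toDual ℝ E yk).hasFDerivAt
      simpa using hlin.sub_const ⟪yk, c⟫
    have heq : (fun z : E => ⟪yk, z - c⟫) = fun z : E => ⟪yk, z⟫ - ⟪yk, c⟫ := by
      funext z; rw [inner_sub_right]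
    rw [heq]; exact this
  have h3 : HasFDerivAt (fun z : E => ρk / 2 * ‖z - c‖ ^ 2)
      (toDual ℝ E (ρk • (xs - c))) xs := by
    have hid : HasFDerivAt (fun z : E => z - c) (ContinuousLinearMap.id ℝ E) xs := by
      simpa using (hasFDerivAt_id xs).sub_const c
    have hinner := hid.inner (𝕜 := ℝ) hid
    have h4 := hinner.const_mul (ρk / 2)
    have heq : (fun z : E => ρk / 2 * ⟪z - c, z - c⟫) = fun z : E => ρk / 2 * ‖z - c‖ ^ 2 := by
      funext z; rw [real_inner_self_eq_norm_sq]
    rw [heq] at h4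
    refine h4.congr_fderiv ?_
    apply ContinuousLinearMap.ext
    intro w
    simp [fderivInnerCLM_apply, real_inner_smul_left, inner_sub_left, inner_sub_right,
      real_inner_comm (xs - c) w]
    ring
  have := (hg.add h2).add h3
  refine this.congr_fderiv ?_
  apply ContinuousLinearMap.ext
  intro w
  simp [toDual_apply_apply, inner_add_left, real_inner_smul_left]

/-- stationarity of the x_k subproblem at a global minimizer -/
lemma admm_stationary (g : E → ℝ) (g' : E → E) (hgrad : ∀ z, HasGradientAt g (g' z) z)
    (yk c : E) (ρk : ℝ) (xs : E)
    (hmin : ∀ z, g xs + ⟪yk, xs - c⟫ + ρk / 2 * ‖xs - c‖ ^ 2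
      ≤ g z + ⟪yk, z - c⟫ + ρk / 2 * ‖z - c‖ ^ 2) :
    g' xs + yk + ρk • (xs - c) = 0 := by
  have hD := admm_subprob_fderiv g g' hgrad yk c ρk xs
  have hloc : IsLocalMin (fun z => g z + ⟪yk, z - c⟫ + ρk / 2 * ‖z - c‖ ^ 2) xs :=
    Filter.Eventually.of_forall hmin
  have hzero := hloc.hasFDerivAt_eq_zero hD
  have := congrArg (fun (f : StrongDual ℝ E) => (InnerProductSpace.toDual ℝ E).symm f) hzero
  simpa using this

end Aux4

section Aux5
variable {E : Type*} [NormedAddCommGroup E] [InnerProductSpace ℝ E] [CompleteSpace E]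

/-- descent lemma: quadratic upper bound for functions with Lipschitz gradient -/
lemma admm_descent (g : E → ℝ) (g' : E → E) (L : ℝ)
    (hgrad : ∀ z, HasGradientAt g (g' z) z)
    (hLip : ∀ u v : E, ‖g' u - g' v‖ ≤ L * ‖u - v‖) (u v : E) :
    g v ≤ g u + ⟪g' u, v - u⟫ + L / 2 * ‖v - u‖ ^ 2 := by
  set d : E := v - u with hd
  set ψ : ℝ → ℝ := fun s => g (u + s • d) - s * ⟪g' u, d⟫ - s ^ 2 * (L / 2 * ‖d‖ ^ 2) with hψ
  have hpath : ∀ s : ℝ, HasDerivAt (fun s : ℝ => u + s • d) d s := by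
    intro s
    simpa using ((hasDerivAt_id s).smul_const d).const_add u
  have hgd : ∀ s : ℝ, HasDerivAt (fun s : ℝ => g (u + s • d)) ⟪g' (u + s • d), d⟫ s := by
    intro s
    have hcomp := (hgrad (u + s • d)).hasFDerivAt.comp_hasDerivAt s (hpath s)
    simpa [InnerProductSpace.toDual_apply_apply, Function.comp_def] using hcomp
  have hψ' : ∀ s : ℝ, HasDerivAt ψ
      (⟪g' (u + s • d), d⟫ - ⟪g' u, d⟫ - 2 * s * (L / 2 * ‖d‖ ^ 2)) s := by
    intro s
    have h1 := (hgd s).sub ((hasDerivAt_id s).const_mul ⟪g' u, d⟫)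
    have h2 : HasDerivAt (fun s : ℝ => s ^ 2 * (L / 2 * ‖d‖ ^ 2))
        (2 * s * (L / 2 * ‖d‖ ^ 2)) s := by
      have := (hasDerivAt_pow 2 s).mul_const (L / 2 * ‖d‖ ^ 2)
      simpa [mul_comm] using this
    have := h1.sub h2
    simpa [hψ, mul_comm, Pi.sub_def] using this
  have hanti : AntitoneOn ψ (Set.Icc 0 1) := by
    apply antitoneOn_of_deriv_nonpos (convex_Icc 0 1)
    · exact fun s _ => ((hψ' s).differentiableAt).continuousAt.continuousWithinAt
    · intro s _
      exact ((hψ' s).differentiableAt).differentiableWithinAt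
    · intro s hs
      rw [interior_Icc] at hs
      rw [(hψ' s).deriv]
      have hib : ⟪g' (u + s • d) - g' u, d⟫ ≤ ‖g' (u + s • d) - g' u‖ * ‖d‖ :=
        real_inner_le_norm _ _
      have hlips : ‖g' (u + s • d) - g' u‖ ≤ L * (s * ‖d‖) := by
        have := hLip (u + s • d) u
        simpa [norm_smul, abs_of_pos hs.1] using this
      have hdn : (0 : ℝ) ≤ ‖d‖ := norm_nonneg d
      rw [inner_sub_left] at hib
      nlinarith [hs.1.le, norm_nonneg (g' (u + s • d) - g' u)]
  have h01 := hanti (Set.mem_Icc.mpr ⟨le_refl 0, zero_le_one⟩)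
    (Set.mem_Icc.mpr ⟨zero_le_one, le_refl 1⟩) zero_le_one
  simp only [hψ, zero_smul, add_zero, one_smul, zero_mul, zero_pow, sub_zero, one_mul, one_pow] at h01
  have : u + d = v := by rw [hd]; abel
  rw [this] at h01
  linarith

end Aux5

section Ident
variable {E : Type*} [NormedAddCommGroup E] [InnerProductSpace ℝ E]

/-- decomposition of the x_k-subproblem objective into strongly convex + linear + const -/
lemma admm_phi_decomp (gk : E → ℝ) (ρk : ℝ) (yk w z : E) :
    gk z + ⟪yk, z - w⟫ + ρk / 2 * ‖z - w‖ ^ 2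
      = (gk z + ρk / 2 * ‖z‖ ^ 2) + ⟪yk - ρk • w, z⟫ + (ρk / 2 * ‖w‖ ^ 2 - ⟪yk, w⟫) := by
  have h1 : ‖z - w‖ ^ 2 = ‖z‖ ^ 2 - 2 * ⟪z, w⟫ + ‖w‖ ^ 2 := norm_sub_sq_real z w
  have h2 : ⟪yk, z - w⟫ = ⟪yk, z⟫ - ⟪yk, w⟫ := inner_sub_right _ _ _
  have h3 : ⟪yk - ρk • w, z⟫ = ⟪yk, z⟫ - ρk * ⟪z, w⟫ := by
    rw [inner_sub_left, real_inner_smul_left, real_inner_comm w z]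
  rw [h1, h2, h3]; ring

/-- per-k decomposition of the x0-subproblem pieces -/
lemma admm_x0_piece (ρk : ℝ) (yk u z : E) :
    ⟪yk, u - z⟫ + ρk / 2 * ‖u - z‖ ^ 2
      = ρk / 2 * ‖z‖ ^ 2 - ⟪yk + ρk • u, z⟫ + (⟪yk, u⟫ + ρk / 2 * ‖u‖ ^ 2) := by
  have h1 : ‖u - z‖ ^ 2 = ‖u‖ ^ 2 - 2 * ⟪u, z⟫ + ‖z‖ ^ 2 := norm_sub_sq_real u z
  have h2 : ⟪yk, u - z⟫ = ⟪yk, u⟫ - ⟪yk, z⟫ := inner_sub_right _ _ _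
  have h3 : ⟪yk + ρk • u, z⟫ = ⟪yk, z⟫ + ρk * ⟪u, z⟫ := by
    rw [inner_add_left, real_inner_smul_left]
  rw [h1, h2, h3]; ring

end Ident

/-- augL written as h(x0) plus per-k subproblem objectives -/
lemma augL_phi {N K : ℕ} (g : Fin K → EuclideanSpace ℝ (Fin N) → ℝ)
    (h : EuclideanSpace ℝ (Fin N) → ℝ) (ρ : Fin K → ℝ)
    (xs : Fin K → EuclideanSpace ℝ (Fin N)) (w : EuclideanSpace ℝ (Fin N))
    (ys : Fin K → EuclideanSpace ℝ (Fin N)) :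
    augL g h ρ xs w ys
      = h w + ∑ k, (g k (xs k) + ⟪ys k, xs k - w⟫ + ρ k / 2 * ‖xs k - w‖ ^ 2) := by
  simp only [augL, Finset.sum_add_distrib]; ring

/-- augL as a function of x0: strongly convex + linear + const decomposition -/
lemma augL_x0_decomp {N K : ℕ} (g : Fin K → EuclideanSpace ℝ (Fin N) → ℝ)
    (h : EuclideanSpace ℝ (Fin N) → ℝ) (ρ : Fin K → ℝ)
    (xs : Fin K → EuclideanSpace ℝ (Fin N)) (z : EuclideanSpace ℝ (Fin N))
    (ys : Fin K → EuclideanSpace ℝ (Fin N)) :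
    augL g h ρ xs z ys
      = (h z + (∑ k, ρ k) / 2 * ‖z‖ ^ 2) + ⟪-(∑ k, (ys k + ρ k • xs k)), z⟫
        + ((∑ k, g k (xs k)) + ∑ k, (⟪ys k, xs k⟫ + ρ k / 2 * ‖xs k‖ ^ 2)) := by
  have hsum : (∑ k, ⟪ys k, xs k - z⟫) + ∑ k, ρ k / 2 * ‖xs k - z‖ ^ 2
      = ∑ k, (⟪ys k, xs k - z⟫ + ρ k / 2 * ‖xs k - z‖ ^ 2) := (Finset.sum_add_distrib).symm
  have hper : ∀ k : Fin K, ⟪ys k, xs k - z⟫ + ρ k / 2 * ‖xs k - z‖ ^ 2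
      = ρ k / 2 * ‖z‖ ^ 2 - ⟪ys k + ρ k • xs k, z⟫ + (⟪ys k, xs k⟫ + ρ k / 2 * ‖xs k‖ ^ 2) :=
    fun k => admm_x0_piece (ρ k) (ys k) (xs k) z
  have hinner : ⟪-(∑ k, (ys k + ρ k • xs k)), z⟫ = -∑ k, ⟪ys k + ρ k • xs k, z⟫ := by
    rw [inner_neg_left, sum_inner]
  have hquad : ∑ k, (ρ k / 2 * ‖z‖ ^ 2) = (∑ k, ρ k) / 2 * ‖z‖ ^ 2 := by
    rw [← Finset.sum_mul, ← Finset.sum_div]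
  rw [augL, add_assoc, hsum, Finset.sum_congr rfl (fun k _ => hper k), hinner]
  rw [Finset.sum_add_distrib, Finset.sum_sub_distrib, hquad]
  ring

set_option maxHeartbeats 2000000 in
/-- **Theorem 2.1, part 1.**  For the flexible ADMM (Algorithm 2) on the consensus problem
under the period-`T` essentially cyclic rule and Assumptions A1–A3:
`‖x_k^{t+1} − x_0^{t+1}‖ → 0`, `‖x_k^{t+1} − x_k^t‖ → 0`, `‖x_0^{t+1} − x_0^t‖ → 0` and
`‖y_k^{t+1} − y_k^t‖ → 0` as `t → ∞`. -/
theorem theorem2_1_part1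
    {N K : ℕ} (hK : 1 ≤ K)
    (g : Fin K → EuclideanSpace ℝ (Fin N) → ℝ)
    (g' : Fin K → EuclideanSpace ℝ (Fin N) → EuclideanSpace ℝ (Fin N))
    (h : EuclideanSpace ℝ (Fin N) → ℝ)
    (X : Set (EuclideanSpace ℝ (Fin N)))
    (Lg ρ γ : Fin K → ℝ)
    (x : ℕ → Fin K → EuclideanSpace ℝ (Fin N))
    (x0 : ℕ → EuclideanSpace ℝ (Fin N))
    (y : ℕ → Fin K → EuclideanSpace ℝ (Fin N))
    (C : ℕ → Finset (Option (Fin K)))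
    -- Assumption A1
    (hgrad : ∀ k z, HasGradientAt (g k) (g' k z) z)
    (hLpos : ∀ k, 0 < Lg k)
    (hLip : ∀ k u v, ‖g' k u - g' k v‖ ≤ Lg k * ‖u - v‖)
    (hconv : ConvexOn ℝ Set.univ h)
    (hXne : X.Nonempty) (hXcl : IsClosed X) (hXcv : Convex ℝ X)
    (hρ : ∀ k, 0 < ρ k)
    -- Assumption A2
    (hγpos : ∀ k, 0 < γ k)
    (hstrong : ∀ k, StrongConvexOn Set.univ (γ k)
      (fun z : EuclideanSpace ℝ (Fin N) => g k z + ρ k / 2 * ‖z‖ ^ 2))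
    (hA2b : ∀ k, 2 * Lg k ^ 2 < ρ k * γ k)
    (hA2c : ∀ k, Lg k ≤ ρ k)
    -- Assumption A3 : `f` is bounded below over `X`
    (hbdd : BddBelow ((fun z => (∑ k, g k z) + h z) '' X))
    -- Algorithm 2
    (hC1 : C 1 = Finset.univ)
    (hx0upd : ∀ t : ℕ,
      (none ∈ C (t + 1) → x0 (t + 1) ∈ X ∧ ∀ z ∈ X,
        augL g h ρ (x t) (x0 (t + 1)) (y t) ≤ augL g h ρ (x t) z (y t)) ∧
      (none ∉ C (t + 1) → x0 (t + 1) = x0 t))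
    (hxupd : ∀ (t : ℕ) (k : Fin K),
      (some k ∈ C (t + 1) → ∀ z : EuclideanSpace ℝ (Fin N),
        g k (x (t + 1) k) + ⟪y t k, x (t + 1) k - x0 (t + 1)⟫
            + ρ k / 2 * ‖x (t + 1) k - x0 (t + 1)‖ ^ 2
          ≤ g k z + ⟪y t k, z - x0 (t + 1)⟫ + ρ k / 2 * ‖z - x0 (t + 1)‖ ^ 2) ∧
      (some k ∉ C (t + 1) → x (t + 1) k = x t k))
    (hyupd : ∀ (t : ℕ) (k : Fin K),
      (some k ∈ C (t + 1) → y (t + 1) k = y t k + ρ k • (x (t + 1) k - x0 (t + 1))) ∧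
      (some k ∉ C (t + 1) → y (t + 1) k = y t k))
    -- period-T essentially cyclic rule
    (T : ℕ) (hT : 1 ≤ T)
    (hcyc : ∀ (t : ℕ) (j : Option (Fin K)), ∃ i, 1 ≤ i ∧ i ≤ T ∧ j ∈ C (t + i))
    :
    (∀ k : Fin K,
      Tendsto (fun t : ℕ => ‖x (t + 1) k - x0 (t + 1)‖) atTop (nhds 0)) ∧
    (∀ k : Fin K,
      Tendsto (fun t : ℕ => ‖x (t + 1) k - x t k‖) atTop (nhds 0)) ∧
    Tendsto (fun t : ℕ => ‖x0 (t + 1) - x0 t‖) atTop (nhds 0) ∧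
    (∀ k : Fin K,
      Tendsto (fun t : ℕ => ‖y (t + 1) k - y t k‖) atTop (nhds 0)) := by
  haveI : Nonempty (Fin K) := ⟨⟨0, hK⟩⟩
  -- abbreviations
  set σ : ℝ := ∑ k, ρ k with hσdef
  have hσ : 0 < σ := Finset.sum_pos (fun k _ => hρ k) Finset.univ_nonempty
  have hc : ∀ k, 0 < γ k / 2 - Lg k ^ 2 / ρ k := by
    intro k
    have h1 : Lg k ^ 2 / ρ k < γ k / 2 := by
      rw [div_lt_div_iff₀ (hρ k) two_pos]; nlinarith [hA2b k]
    linarith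
  -- stationarity at update times
  have Hstat : ∀ t k, some k ∈ C (t + 1) → y (t + 1) k = -(g' k (x (t + 1) k)) := by
    intro t k hk
    have hmin := (hxupd t k).1 hk
    have h0 := admm_stationary (g k) (g' k) (hgrad k) (y t k) (x0 (t + 1)) (ρ k)
      (x (t + 1) k) hmin
    rw [add_assoc] at h0
    have h1 : y t k + ρ k • (x (t + 1) k - x0 (t + 1)) = -(g' k (x (t + 1) k)) :=
      eq_neg_of_add_eq_zero_right h0
    rw [(hyupd t k).1 hk, h1]
  -- invariant: y t = -∇g(x t), x0 t ∈ X for t ≥ 1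
  have Hinv : ∀ t, 1 ≤ t → (∀ k, y t k = -(g' k (x t k))) ∧ x0 t ∈ X := by
    intro t ht
    induction t with
    | zero => omega
    | succ n ih =>
      constructor
      · intro k
        by_cases hk : some k ∈ C (n + 1)
        · exact Hstat n k hk
        · rcases Nat.eq_zero_or_pos n with hn | hn
          · subst hn; rw [hC1] at hk; exact absurd (Finset.mem_univ _) hk
          · rw [(hyupd n k).2 hk, (hxupd n k).2 hk]; exact (ih hn).1 k
      · by_cases h0 : none ∈ C (n + 1)
        · exact ((hx0upd n).1 h0).1
        · rcases Nat.eq_zero_or_pos n with hn | hn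
          · subst hn; rw [hC1] at h0; exact absurd (Finset.mem_univ _) h0
          · rw [(hx0upd n).2 h0]; exact (ih hn).2
  -- dual change bound
  have Hdy : ∀ t, 1 ≤ t → ∀ k, ‖y (t + 1) k - y t k‖ ≤ Lg k * ‖x (t + 1) k - x t k‖ := by
    intro t ht k
    by_cases hk : some k ∈ C (t + 1)
    · rw [Hstat t k hk, (Hinv t ht).1 k]
      have h1 : -(g' k (x (t + 1) k)) - -(g' k (x t k))
          = -(g' k (x (t + 1) k) - g' k (x t k)) := by abel
      rw [h1, norm_neg]
      exact hLip k _ _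
    · rw [(hyupd t k).2 hk, sub_self, norm_zero]
      exact mul_nonneg (hLpos k).le (norm_nonneg _)
  -- per-step descent
  have Hdesc : ∀ t, 1 ≤ t →
      augL g h ρ (x (t + 1)) (x0 (t + 1)) (y (t + 1))
        + (σ / 2 * ‖x0 (t + 1) - x0 t‖ ^ 2
          + ∑ k, (γ k / 2 - Lg k ^ 2 / ρ k) * ‖x (t + 1) k - x t k‖ ^ 2)
      ≤ augL g h ρ (x t) (x0 t) (y t) := by
    intro t ht
    -- D2 : primal block updates decrease
    have D2per : ∀ k : Fin K,
        g k (x (t + 1) k) + ⟪y t k, x (t + 1) k - x0 (t + 1)⟫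
          + ρ k / 2 * ‖x (t + 1) k - x0 (t + 1)‖ ^ 2
          + γ k / 2 * ‖x (t + 1) k - x t k‖ ^ 2
        ≤ g k (x t k) + ⟪y t k, x t k - x0 (t + 1)⟫
          + ρ k / 2 * ‖x t k - x0 (t + 1)‖ ^ 2 := by
      intro k
      by_cases hk : some k ∈ C (t + 1)
      · have hm : ∀ z, (fun z : EuclideanSpace ℝ (Fin N) => g k z + ρ k / 2 * ‖z‖ ^ 2) (x (t + 1) k)
            + ⟪y t k - ρ k • x0 (t + 1), x (t + 1) k⟫
            ≤ (fun z : EuclideanSpace ℝ (Fin N) => g k z + ρ k / 2 * ‖z‖ ^ 2) z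
              + ⟪y t k - ρ k • x0 (t + 1), z⟫ := by
          intro z
          have h1 := (hxupd t k).1 hk z
          rw [admm_phi_decomp (g k) (ρ k) (y t k) (x0 (t + 1)) (x (t + 1) k),
            admm_phi_decomp (g k) (ρ k) (y t k) (x0 (t + 1)) z] at h1
          dsimp only
          linarith
        have h2 := admm_strong_min Set.univ
          (fun z : EuclideanSpace ℝ (Fin N) => g k z + ρ k / 2 * ‖z‖ ^ 2) (γ k)
          (hstrong k) (y t k - ρ k • x0 (t + 1)) (x (t + 1) k) trivial
          (fun z _ => hm z) (x t k) trivial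
        rw [norm_sub_rev] at h2
        rw [admm_phi_decomp (g k) (ρ k) (y t k) (x0 (t + 1)) (x (t + 1) k),
          admm_phi_decomp (g k) (ρ k) (y t k) (x0 (t + 1)) (x t k)]
        linarith
      · rw [(hxupd t k).2 hk, sub_self, norm_zero]
        simp
    have D2 : augL g h ρ (x (t + 1)) (x0 (t + 1)) (y t)
          + ∑ k, γ k / 2 * ‖x (t + 1) k - x t k‖ ^ 2
        ≤ augL g h ρ (x t) (x0 (t + 1)) (y t) := by
      rw [augL_phi g h ρ (x (t + 1)) (x0 (t + 1)) (y t),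
        augL_phi g h ρ (x t) (x0 (t + 1)) (y t)]
      have := Finset.sum_le_sum (fun k (_ : k ∈ Finset.univ) => D2per k)
      rw [Finset.sum_add_distrib] at this
      linarith
    -- D1 : x0 update decreases
    have D1 : augL g h ρ (x t) (x0 (t + 1)) (y t) + σ / 2 * ‖x0 (t + 1) - x0 t‖ ^ 2
        ≤ augL g h ρ (x t) (x0 t) (y t) := by
      by_cases h0 : none ∈ C (t + 1)
      · obtain ⟨hwX, hminz⟩ := (hx0upd t).1 h0
        have huniv : StrongConvexOn Set.univ σ
            (fun z : EuclideanSpace ℝ (Fin N) => h z + σ / 2 * ‖z‖ ^ 2) := by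
          rw [strongConvexOn_iff_convex]
          have heq : (fun z : EuclideanSpace ℝ (Fin N) =>
              (h z + σ / 2 * ‖z‖ ^ 2) - σ / 2 * ‖z‖ ^ 2) = h := by
            funext z; ring
          rw [heq]; exact hconv
        have hsc : StrongConvexOn X σ
            (fun z : EuclideanSpace ℝ (Fin N) => h z + σ / 2 * ‖z‖ ^ 2) :=
          ⟨hXcv, fun u _ v' _ a b ha hb hab => huniv.2 trivial trivial ha hb hab⟩
        have hm : ∀ z ∈ X,
            (fun z : EuclideanSpace ℝ (Fin N) => h z + σ / 2 * ‖z‖ ^ 2) (x0 (t + 1))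
              + ⟪-(∑ k, (y t k + ρ k • x t k)), x0 (t + 1)⟫
            ≤ (fun z : EuclideanSpace ℝ (Fin N) => h z + σ / 2 * ‖z‖ ^ 2) z
              + ⟪-(∑ k, (y t k + ρ k • x t k)), z⟫ := by
          intro z hz
          have h1 := hminz z hz
          rw [augL_x0_decomp g h ρ (x t) (x0 (t + 1)) (y t),
            augL_x0_decomp g h ρ (x t) z (y t)] at h1
          dsimp only
          rw [hσdef]
          linarith
        have h2 := admm_strong_min X
          (fun z : EuclideanSpace ℝ (Fin N) => h z + σ / 2 * ‖z‖ ^ 2) σ hsc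
          (-(∑ k, (y t k + ρ k • x t k))) (x0 (t + 1)) hwX hm (x0 t) (Hinv t ht).2
        rw [norm_sub_rev] at h2
        rw [augL_x0_decomp g h ρ (x t) (x0 (t + 1)) (y t),
          augL_x0_decomp g h ρ (x t) (x0 t) (y t), ← hσdef]
        linarith
      · have he := (hx0upd t).2 h0
        rw [he, sub_self, norm_zero]
        simp
    -- D3 : dual update increases by a controlled amount
    have D3per : ∀ k : Fin K, ⟪y (t + 1) k - y t k, x (t + 1) k - x0 (t + 1)⟫
        ≤ Lg k ^ 2 / ρ k * ‖x (t + 1) k - x t k‖ ^ 2 := by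
      intro k
      by_cases hk : some k ∈ C (t + 1)
      · have hy := (hyupd t k).1 hk
        have hdy : y (t + 1) k - y t k = ρ k • (x (t + 1) k - x0 (t + 1)) := by
          rw [hy]; abel
        have hin : ⟪y (t + 1) k - y t k, x (t + 1) k - x0 (t + 1)⟫
            = ρ k * ‖x (t + 1) k - x0 (t + 1)‖ ^ 2 := by
          rw [hdy, real_inner_smul_left, real_inner_self_eq_norm_sq]
        have hnorm : ‖y (t + 1) k - y t k‖ = ρ k * ‖x (t + 1) k - x0 (t + 1)‖ := by
          rw [hdy, norm_smul, Real.norm_eq_abs, abs_of_pos (hρ k)]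
        have hb := Hdy t ht k
        rw [hnorm] at hb
        rw [hin, div_mul_eq_mul_div, le_div_iff₀ (hρ k)]
        nlinarith [mul_self_le_mul_self
          (mul_nonneg (hρ k).le (norm_nonneg (x (t + 1) k - x0 (t + 1)))) hb]
      · rw [(hyupd t k).2 hk, sub_self]
        simp only [inner_zero_left]
        have := hρ k
        positivity
    have D3 : augL g h ρ (x (t + 1)) (x0 (t + 1)) (y (t + 1))
        ≤ augL g h ρ (x (t + 1)) (x0 (t + 1)) (y t)
          + ∑ k, Lg k ^ 2 / ρ k * ‖x (t + 1) k - x t k‖ ^ 2 := by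
      have hid : ∀ k : Fin K, ⟪y (t + 1) k, x (t + 1) k - x0 (t + 1)⟫
          = ⟪y t k, x (t + 1) k - x0 (t + 1)⟫
            + ⟪y (t + 1) k - y t k, x (t + 1) k - x0 (t + 1)⟫ := by
        intro k; rw [inner_sub_left]; ring
      simp only [augL]
      rw [Finset.sum_congr rfl (fun k _ => hid k), Finset.sum_add_distrib]
      have := Finset.sum_le_sum (fun k (_ : k ∈ Finset.univ) => D3per k)
      linarith
    -- combine
    have hsplit : ∑ k, (γ k / 2 - Lg k ^ 2 / ρ k) * ‖x (t + 1) k - x t k‖ ^ 2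
        = (∑ k, γ k / 2 * ‖x (t + 1) k - x t k‖ ^ 2)
          - ∑ k, Lg k ^ 2 / ρ k * ‖x (t + 1) k - x t k‖ ^ 2 := by
      rw [← Finset.sum_sub_distrib]
      exact Finset.sum_congr rfl (fun k _ => by ring)
    rw [hsplit]
    linarith
  -- lower bound
  obtain ⟨B, hB⟩ := hbdd
  have Hlb : ∀ t, 1 ≤ t → B ≤ augL g h ρ (x t) (x0 t) (y t) := by
    intro t ht
    obtain ⟨hy, hx0X⟩ := Hinv t ht
    have per : ∀ k : Fin K, g k (x0 t)
        ≤ g k (x t k) + ⟪y t k, x t k - x0 t⟫ + ρ k / 2 * ‖x t k - x0 t‖ ^ 2 := by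
      intro k
      have hd := admm_descent (g k) (g' k) (Lg k) (hgrad k) (hLip k) (x t k) (x0 t)
      have hinn : ⟪y t k, x t k - x0 t⟫ = -⟪g' k (x t k), x t k - x0 t⟫ := by
        rw [hy k, inner_neg_left]
      have hinn2 : ⟪g' k (x t k), x0 t - x t k⟫ = -⟪g' k (x t k), x t k - x0 t⟫ := by
        rw [show x0 t - x t k = -(x t k - x0 t) by abel, inner_neg_right]
      rw [hinn2] at hd
      rw [norm_sub_rev] at hd
      have hsq : (0:ℝ) ≤ ‖x t k - x0 t‖ ^ 2 := sq_nonneg _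
      have hρL := hA2c k
      rw [hinn]
      nlinarith
    have hsum := Finset.sum_le_sum (fun k (_ : k ∈ Finset.univ) => per k)
    have hBf : B ≤ (∑ k, g k (x0 t)) + h (x0 t) :=
      hB ⟨x0 t, hx0X, rfl⟩
    rw [Finset.sum_add_distrib, Finset.sum_add_distrib] at hsum
    rw [augL_phi g h ρ (x t) (x0 t) (y t), Finset.sum_add_distrib, Finset.sum_add_distrib]
    linarith
  -- limit machinery
  set f : ℕ → ℝ := fun n => augL g h ρ (x (n + 1)) (x0 (n + 1)) (y (n + 1)) with hfdef
  have hanti : Antitone f := by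
    apply antitone_nat_of_succ_le
    intro n
    have hd := Hdesc (n + 1) (by omega)
    have hnn : 0 ≤ σ / 2 * ‖x0 (n + 1 + 1) - x0 (n + 1)‖ ^ 2
        + ∑ k, (γ k / 2 - Lg k ^ 2 / ρ k) * ‖x (n + 1 + 1) k - x (n + 1) k‖ ^ 2 := by
      apply add_nonneg
      · positivity
      · exact Finset.sum_nonneg fun k _ => mul_nonneg (hc k).le (sq_nonneg _)
    simp only [hfdef]
    linarith
  have hbdd2 : BddBelow (Set.range f) := by
    refine ⟨B, ?_⟩
    rintro _ ⟨n, rfl⟩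
    exact Hlb (n + 1) (by omega)
  have htendM : Tendsto f atTop (nhds (⨅ n, f n)) := tendsto_atTop_ciInf hanti hbdd2
  have hdiff : Tendsto (fun n => f n - f (n + 1)) atTop (nhds 0) := by
    have h2 := htendM.sub (htendM.comp (tendsto_add_atTop_nat 1))
    simpa [Function.comp] using h2
  have hstep : ∀ n : ℕ, σ / 2 * ‖x0 (n + 2) - x0 (n + 1)‖ ^ 2
      + ∑ k, (γ k / 2 - Lg k ^ 2 / ρ k) * ‖x (n + 2) k - x (n + 1) k‖ ^ 2
      ≤ f n - f (n + 1) := by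
    intro n
    have hd := Hdesc (n + 1) (by omega)
    simp only [hfdef]
    have e1 : n + 1 + 1 = n + 2 := rfl
    rw [e1] at hd
    linarith
  have Ha : ∀ k, Tendsto (fun t : ℕ => ‖x (t + 1) k - x t k‖) atTop (nhds 0) := by
    intro k
    have h1 : ∀ n : ℕ, (γ k / 2 - Lg k ^ 2 / ρ k) * ‖x (n + 2) k - x (n + 1) k‖ ^ 2
        ≤ f n - f (n + 1) := by
      intro n
      have hterm : (γ k / 2 - Lg k ^ 2 / ρ k) * ‖x (n + 2) k - x (n + 1) k‖ ^ 2
          ≤ ∑ j, (γ j / 2 - Lg j ^ 2 / ρ j) * ‖x (n + 2) j - x (n + 1) j‖ ^ 2 :=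
        Finset.single_le_sum
          (f := fun j => (γ j / 2 - Lg j ^ 2 / ρ j) * ‖x (n + 2) j - x (n + 1) j‖ ^ 2)
          (fun j _ => mul_nonneg (hc j).le (sq_nonneg _)) (Finset.mem_univ k)
      have hb0 : 0 ≤ σ / 2 * ‖x0 (n + 2) - x0 (n + 1)‖ ^ 2 := by positivity
      have := hstep n
      linarith
    have h0 : ∀ n : ℕ, 0 ≤ (γ k / 2 - Lg k ^ 2 / ρ k) * ‖x (n + 2) k - x (n + 1) k‖ ^ 2 :=
      fun n => mul_nonneg (hc k).le (sq_nonneg _)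
    have h2 : Tendsto (fun n : ℕ => (γ k / 2 - Lg k ^ 2 / ρ k)
        * ‖x (n + 2) k - x (n + 1) k‖ ^ 2) atTop (nhds 0) := squeeze_zero h0 h1 hdiff
    have h3 : Tendsto (fun n : ℕ => ‖x (n + 2) k - x (n + 1) k‖ ^ 2) atTop (nhds 0) := by
      have h4 := h2.const_mul (γ k / 2 - Lg k ^ 2 / ρ k)⁻¹
      simpa [← mul_assoc, inv_mul_cancel₀ (ne_of_gt (hc k))] using h4
    have h5 := h3.sqrt
    have hfun : (fun n : ℕ => Real.sqrt (‖x (n + 2) k - x (n + 1) k‖ ^ 2))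
        = fun n : ℕ => ‖x (n + 2) k - x (n + 1) k‖ :=
      funext fun n => Real.sqrt_sq (norm_nonneg _)
    rw [hfun, Real.sqrt_zero] at h5
    exact (tendsto_add_atTop_iff_nat 1).mp h5
  have Hb : Tendsto (fun t : ℕ => ‖x0 (t + 1) - x0 t‖) atTop (nhds 0) := by
    have h1 : ∀ n : ℕ, σ / 2 * ‖x0 (n + 2) - x0 (n + 1)‖ ^ 2 ≤ f n - f (n + 1) := by
      intro n
      have hsn : 0 ≤ ∑ j, (γ j / 2 - Lg j ^ 2 / ρ j) * ‖x (n + 2) j - x (n + 1) j‖ ^ 2 :=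
        Finset.sum_nonneg fun j _ => mul_nonneg (hc j).le (sq_nonneg _)
      have := hstep n
      linarith
    have h0 : ∀ n : ℕ, 0 ≤ σ / 2 * ‖x0 (n + 2) - x0 (n + 1)‖ ^ 2 := fun n => by positivity
    have h2 : Tendsto (fun n : ℕ => σ / 2 * ‖x0 (n + 2) - x0 (n + 1)‖ ^ 2) atTop (nhds 0) :=
      squeeze_zero h0 h1 hdiff
    have h3 : Tendsto (fun n : ℕ => ‖x0 (n + 2) - x0 (n + 1)‖ ^ 2) atTop (nhds 0) := by
      have hne : σ / 2 ≠ 0 := by positivity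
      have h4 := h2.const_mul (σ / 2)⁻¹
      rw [mul_zero] at h4
      exact h4.congr fun n => by rw [inv_mul_cancel_left₀ hne]
    have h5 := h3.sqrt
    have hfun : (fun n : ℕ => Real.sqrt (‖x0 (n + 2) - x0 (n + 1)‖ ^ 2))
        = fun n : ℕ => ‖x0 (n + 2) - x0 (n + 1)‖ :=
      funext fun n => Real.sqrt_sq (norm_nonneg _)
    rw [hfun, Real.sqrt_zero] at h5
    exact (tendsto_add_atTop_iff_nat 1).mp h5
  have Hy : ∀ k, Tendsto (fun t : ℕ => ‖y (t + 1) k - y t k‖) atTop (nhds 0) := by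
    intro k
    have hbnd := (Ha k).const_mul (Lg k)
    rw [mul_zero] at hbnd
    exact squeeze_zero' (Eventually.of_forall fun t => norm_nonneg _)
      (eventually_atTop.2 ⟨1, fun t ht => Hdy t ht k⟩) hbnd
  have Hgap : ∀ k : Fin K,
      Tendsto (fun t : ℕ => ‖x (t + 1) k - x0 (t + 1)‖) atTop (nhds 0) := by
    intro k
    -- telescoping bound
    have htel : ∀ n m : ℕ, n ≤ m → ‖x m k - x0 m‖ ≤ ‖x n k - x0 n‖
        + ∑ s ∈ Finset.Ico n m, (‖x (s + 1) k - x s k‖ + ‖x0 (s + 1) - x0 s‖) := by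
      intro n m hnm
      induction m, hnm using Nat.le_induction with
      | base => simp
      | succ m hnm ih =>
        have hstep2 : ‖x (m + 1) k - x0 (m + 1)‖ ≤ ‖x m k - x0 m‖
            + (‖x (m + 1) k - x m k‖ + ‖x0 (m + 1) - x0 m‖) := by
          have hidd : x (m + 1) k - x0 (m + 1)
              = (x m k - x0 m) + (x (m + 1) k - x m k) - (x0 (m + 1) - x0 m) := by abel
          rw [hidd]
          refine le_trans (norm_sub_le _ _) ?_
          have := norm_add_le (x m k - x0 m) (x (m + 1) k - x m k)
          linarith
        rw [Finset.sum_Ico_succ_top hnm]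
        linarith
    -- update-time bound within each window
    have hupd2 : ∀ t : ℕ, 1 ≤ t → ∃ s : ℕ, t ≤ s ∧ s < t + T ∧
        ‖x (s + 1) k - x0 (s + 1)‖ ≤ Lg k / ρ k * ‖x (s + 1) k - x s k‖ := by
      intro t ht
      obtain ⟨i, hi1, hiT, hiC⟩ := hcyc t (some k)
      refine ⟨t + i - 1, by omega, by omega, ?_⟩
      have he : t + i - 1 + 1 = t + i := by omega
      rw [he]
      have hkC : some k ∈ C (t + i - 1 + 1) := by rw [he]; exact hiC
      have hy := (hyupd (t + i - 1) k).1 hkC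
      rw [he] at hy
      have hdy2 : y (t + i) k - y (t + i - 1) k
          = ρ k • (x (t + i) k - x0 (t + i)) := by rw [hy]; abel
      have hnorm : ρ k * ‖x (t + i) k - x0 (t + i)‖
          = ‖y (t + i) k - y (t + i - 1) k‖ := by
        rw [hdy2, norm_smul, Real.norm_eq_abs, abs_of_pos (hρ k)]
      have hDb : ‖y (t + i) k - y (t + i - 1) k‖
          ≤ Lg k * ‖x (t + i) k - x (t + i - 1) k‖ := by
        have h1t : 1 ≤ t + i - 1 := by omega
        have hthis := Hdy (t + i - 1) h1t k
        rw [he] at hthis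
        exact hthis
      rw [div_mul_eq_mul_div, le_div_iff₀ (hρ k), mul_comm]
      linarith
    -- window bound
    have hwin : ∀ t : ℕ, 1 ≤ t → ‖x (t + T) k - x0 (t + T)‖
        ≤ ∑ j ∈ Finset.range T, (Lg k / ρ k * ‖x (t + j + 1) k - x (t + j) k‖
            + (‖x (t + j + 1) k - x (t + j) k‖ + ‖x0 (t + j + 1) - x0 (t + j)‖)) := by
      intro t ht
      obtain ⟨s, hs1, hs2, hs3⟩ := hupd2 t ht
      have h1 := htel (s + 1) (t + T) (by omega)
      have h2 : ∑ u ∈ Finset.Ico (s + 1) (t + T),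
            (‖x (u + 1) k - x u k‖ + ‖x0 (u + 1) - x0 u‖)
          ≤ ∑ u ∈ Finset.Ico t (t + T),
            (‖x (u + 1) k - x u k‖ + ‖x0 (u + 1) - x0 u‖) :=
        Finset.sum_le_sum_of_subset_of_nonneg
          (Finset.Ico_subset_Ico (by omega) le_rfl)
          (fun u _ _ => by positivity)
      have h3 : Lg k / ρ k * ‖x (s + 1) k - x s k‖
          ≤ ∑ u ∈ Finset.Ico t (t + T), Lg k / ρ k * ‖x (u + 1) k - x u k‖ := by
        apply Finset.single_le_sum (f := fun u => Lg k / ρ k * ‖x (u + 1) k - x u k‖)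
          (fun u _ => mul_nonneg (div_nonneg (hLpos k).le (hρ k).le) (norm_nonneg _))
        rw [Finset.mem_Ico]; exact ⟨hs1, hs2⟩
      have hsplit2 : ∑ u ∈ Finset.Ico t (t + T),
          (Lg k / ρ k * ‖x (u + 1) k - x u k‖
            + (‖x (u + 1) k - x u k‖ + ‖x0 (u + 1) - x0 u‖))
          = (∑ u ∈ Finset.Ico t (t + T), Lg k / ρ k * ‖x (u + 1) k - x u k‖)
            + ∑ u ∈ Finset.Ico t (t + T),
              (‖x (u + 1) k - x u k‖ + ‖x0 (u + 1) - x0 u‖) :=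
        Finset.sum_add_distrib
      have hIco : ∑ u ∈ Finset.Ico t (t + T),
          (Lg k / ρ k * ‖x (u + 1) k - x u k‖
            + (‖x (u + 1) k - x u k‖ + ‖x0 (u + 1) - x0 u‖))
          = ∑ j ∈ Finset.range T,
            (Lg k / ρ k * ‖x (t + j + 1) k - x (t + j) k‖
              + (‖x (t + j + 1) k - x (t + j) k‖ + ‖x0 (t + j + 1) - x0 (t + j)‖)) := by
        rw [Finset.sum_Ico_eq_sum_range]
        have hTT : t + T - t = T := by omega
        rw [hTT]
      rw [← hIco, hsplit2]
      linarith
    -- the window bound tends to zero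
    have hS : Tendsto (fun t : ℕ => ∑ j ∈ Finset.range T,
        (Lg k / ρ k * ‖x (t + j + 1) k - x (t + j) k‖
          + (‖x (t + j + 1) k - x (t + j) k‖ + ‖x0 (t + j + 1) - x0 (t + j)‖)))
        atTop (nhds 0) := by
      have hterm : ∀ j ∈ Finset.range T, Tendsto (fun t : ℕ =>
          Lg k / ρ k * ‖x (t + j + 1) k - x (t + j) k‖
            + (‖x (t + j + 1) k - x (t + j) k‖ + ‖x0 (t + j + 1) - x0 (t + j)‖))
          atTop (nhds 0) := by
        intro j _
        have hAj : Tendsto (fun t : ℕ => ‖x (t + j + 1) k - x (t + j) k‖) atTop (nhds 0) := by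
          have := (Ha k).comp (tendsto_add_atTop_nat j)
          simpa [Function.comp_def] using this
        have hBj : Tendsto (fun t : ℕ => ‖x0 (t + j + 1) - x0 (t + j)‖) atTop (nhds 0) := by
          have := Hb.comp (tendsto_add_atTop_nat j)
          simpa [Function.comp_def] using this
        have := (hAj.const_mul (Lg k / ρ k)).add (hAj.add hBj)
        simpa using this
      have h0 := tendsto_finset_sum (Finset.range T) hterm
      simpa using h0
    have hr : Tendsto (fun t : ℕ => ‖x (t + T) k - x0 (t + T)‖) atTop (nhds 0) :=
      squeeze_zero' (Eventually.of_forall fun t => norm_nonneg _)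
        (eventually_atTop.2 ⟨1, fun t ht => hwin t ht⟩) hS
    have hr2 : Tendsto (fun t : ℕ => ‖x t k - x0 t‖) atTop (nhds 0) :=
      (tendsto_add_atTop_iff_nat T).mp hr
    exact (tendsto_add_atTop_iff_nat 1).mpr hr2
  exact ⟨Hgap, Ha, Hb, Hy⟩
end

section
/- (Theorem 2.1, part 2) Let the sequences {x_k^t}, {x_0^t}, {y_k^t} be generated by the flexible ADMM (Algorithm 2) for the consensus problem under the period-T essentially cyclic rule, and suppose Assumptions A1, A2, A3 hold. Let ({x_k*}, x_0*, y*) be any limit point of the sequence ({x_k^{t+1}}, x_0^{t+1}, y^{t+1}) (i.e., the limit along some subsequence). Then ({x_k*}, x_0*, y*) is a stationary solution of the reformulated consensus problem, i.e.: (i) ∇g_k(x_k*) + y_k* = 0 for all k = 1,…,K; (ii) x_0* minimizes over X the function x ↦ h(x) + Σ_{k=1}^K ⟨y_k*, x_k* − x⟩; (iii) x_k* = x_0* for all k = 1,…,K. -/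
open Filter
open scoped RealInnerProductSpace BigOperators

section Helpers

variable {E : Type*} [NormedAddCommGroup E] [InnerProductSpace ℝ E]

/-- helper: if `a ≤ l * c` for all `l ∈ (0,1]`, then `a ≤ 0`. -/
lemma aux_le_zero {a c : ℝ} (h : ∀ l ∈ Set.Ioc (0:ℝ) 1, a ≤ l * c) : a ≤ 0 := by
  have h0 : Tendsto (fun l : ℝ => l * c) (nhdsWithin 0 (Set.Ioi 0)) (nhds 0) := by
    have h1 := (continuous_mul_right c).tendsto 0
    rw [zero_mul] at h1
    exact h1.mono_left nhdsWithin_le_nhds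
  refine ge_of_tendsto h0 ?_
  filter_upwards [Ioc_mem_nhdsGT_of_mem (by norm_num : (0:ℝ) ∈ Set.Ico (0:ℝ) 1)] with l hl
  exact h l hl

/-- helper: strong convexity min inequality. -/
lemma aux_strong_min {σ : ℝ} {s : Set E} {F : E → ℝ}
    (hF : StrongConvexOn s σ F) {m : E} (hm : m ∈ s)
    (hmin : ∀ z ∈ s, F m ≤ F z) : ∀ z ∈ s, F m + σ/2 * ‖z - m‖^2 ≤ F z := by
  intro z hz
  have key : ∀ l ∈ Set.Ioc (0:ℝ) 1, F m + σ/2 * ‖z - m‖^2 - F z ≤ l * (σ/2 * ‖z-m‖^2) := by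
    intro l hl
    obtain ⟨hl0, hl1⟩ := hl
    have hb : (0:ℝ) ≤ 1 - l := by linarith
    have hcomb := hF.2 hz hm (le_of_lt hl0) hb (by ring)
    have hmem : l • z + (1-l) • m ∈ s := hF.1 hz hm (le_of_lt hl0) hb (by ring)
    have h2 := hmin _ hmem
    have h3 := le_trans h2 hcomb
    simp only [smul_eq_mul] at h3
    nlinarith [h3]
  have := aux_le_zero key
  linarith

/-- helper: `σ/2 ‖·‖²` is `σ`-strongly convex. -/
lemma aux_sc_norm {σ : ℝ} {s : Set E} (hs : Convex ℝ s) :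
    StrongConvexOn s σ (fun z => σ/2 * ‖z‖^2) := by
  refine ⟨hs, fun u hu v hv a b ha hb hab => ?_⟩
  have h1 : ‖a • u + b • v‖^2 = a^2*‖u‖^2 + 2*(a*b)*⟪u,v⟫ + b^2*‖v‖^2 := by
    rw [norm_add_sq_real, norm_smul, norm_smul, real_inner_smul_left, real_inner_smul_right]
    simp only [Real.norm_eq_abs, abs_of_nonneg ha, abs_of_nonneg hb, mul_pow]
    ring
  have h2 : ‖u - v‖^2 = ‖u‖^2 - 2*⟪u,v⟫ + ‖v‖^2 := norm_sub_sq_real u v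
  have hb' : b = 1 - a := by linarith
  have key : σ/2*‖a • u + b • v‖^2
      = a*(σ/2*‖u‖^2) + b*(σ/2*‖v‖^2) - a*b*(σ/2*‖u-v‖^2) := by
    rw [h1, h2, hb']; ring
  simp only [smul_eq_mul]
  exact key.le

/-- helper: adding an affine function preserves strong convexity. -/
lemma aux_sc_affine {σ : ℝ} {s : Set E} {F : E → ℝ} (hF : StrongConvexOn s σ F)
    (w : E) (c : ℝ) : StrongConvexOn s σ (fun z => F z + (⟪w, z⟫ + c)) := by
  refine ⟨hF.1, fun u hu v hv a b ha hb hab => ?_⟩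
  have h1 := hF.2 hu hv ha hb hab
  have h2 : ⟪w, a • u + b • v⟫ = a * ⟪w,u⟫ + b * ⟪w,v⟫ := by
    rw [inner_add_right, real_inner_smul_right, real_inner_smul_right]
  have h3 : a*c + b*c = c := by rw [← add_mul, hab, one_mul]
  simp only [smul_eq_mul] at *
  linarith [h1]

/-- helper: adding a convex function preserves strong convexity. -/
lemma aux_sc_add_convex {σ : ℝ} {s : Set E} {F G : E → ℝ} (hF : StrongConvexOn s σ F)
    (hG : ConvexOn ℝ s G) : StrongConvexOn s σ (fun z => F z + G z) := by
  refine ⟨hF.1, fun u hu v hv a b ha hb hab => ?_⟩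
  have h1 := hF.2 hu hv ha hb hab
  have h2 := hG.2 hu hv ha hb hab
  simp only [smul_eq_mul] at *
  linarith [h1, h2]

/-- expansion of the per-block augmented Lagrangian term into strongly convex + affine. -/
lemma aux_expand (y x0 : E) (ρ : ℝ) (z : E) :
    ⟪y, z - x0⟫ + ρ/2 * ‖z - x0‖^2
      = ρ/2 * ‖z‖^2 + (⟪y - ρ • x0, z⟫ + (ρ/2 * ‖x0‖^2 - ⟪y, x0⟫)) := by
  rw [norm_sub_sq_real, inner_sub_right, inner_sub_left, real_inner_smul_left,
    real_inner_comm x0 z]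
  ring

/-- the per-block objective is `γ`-strongly convex. -/
lemma aux_sc_term {g : E → ℝ} {ρ γ : ℝ}
    (hstrong : StrongConvexOn Set.univ γ (fun z => g z + ρ/2 * ‖z‖^2)) (y x0 : E) :
    StrongConvexOn Set.univ γ
      (fun z => g z + ⟪y, z - x0⟫ + ρ/2 * ‖z - x0‖^2) := by
  have heq : (fun z => g z + ⟪y, z - x0⟫ + ρ/2 * ‖z - x0‖^2)
      = fun z => (g z + ρ/2 * ‖z‖^2)
          + (⟪y - ρ • x0, z⟫ + (ρ/2 * ‖x0‖^2 - ⟪y, x0⟫)) := by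
    funext z
    have := aux_expand y x0 ρ z
    linarith
  rw [heq]
  exact aux_sc_affine hstrong _ _

/-- telescoping bound. -/
lemma aux_tele (u : ℕ → E) (a n T : ℕ) (hn : n ≤ T) :
    ‖u (a+n) - u a‖ ≤ ∑ i ∈ Finset.range T, ‖u (a+i+1) - u (a+i)‖ := by
  have h1 := dist_le_range_sum_dist (fun i => u (a+i)) n
  simp only [dist_eq_norm, add_zero] at h1
  calc ‖u (a+n) - u a‖ = ‖u a - u (a+n)‖ := norm_sub_rev _ _
    _ ≤ ∑ i ∈ Finset.range n, ‖u (a+i) - u (a+(i+1))‖ := h1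
    _ = ∑ i ∈ Finset.range n, ‖u (a+i+1) - u (a+i)‖ := by
        refine Finset.sum_congr rfl fun i _ => ?_
        rw [← add_assoc, norm_sub_rev]
    _ ≤ ∑ i ∈ Finset.range T, ‖u (a+i+1) - u (a+i)‖ := by
        refine Finset.sum_le_sum_of_subset_of_nonneg
          (Finset.range_subset_range.2 hn) fun i _ _ => norm_nonneg _

variable [CompleteSpace E]

/-- helper: descent lemma for functions with Lipschitz gradient. -/
lemma aux_descent {f : E → ℝ} {f' : E → E} {L : ℝ}
    (hg : ∀ z, HasGradientAt f (f' z) z)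
    (hlip : ∀ u v, ‖f' u - f' v‖ ≤ L * ‖u - v‖) (u v : E) :
    f v ≤ f u + ⟪f' u, v - u⟫ + L/2 * ‖v - u‖^2 := by
  set w := v - u with hw
  set ψ : ℝ → ℝ := fun s => f (u + s • w) - s * ⟪f' u, w⟫ - L/2 * s^2 * ‖w‖^2 with hψ
  have key : ∀ s : ℝ, HasDerivAt ψ
      (⟪f' (u + s • w), w⟫ - ⟪f' u, w⟫ - L/2 * (2*s) * ‖w‖^2) s := by
    intro s
    have hc : HasDerivAt (fun s : ℝ => u + s • w) w s := by
      simpa using ((hasDerivAt_id s).smul_const w).const_add u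
    have h1 : HasDerivAt (fun s : ℝ => f (u + s • w)) (⟪f' (u + s • w), w⟫) s := by
      have := ((hg (u + s • w)).hasFDerivAt.comp_hasDerivAt s hc)
      simpa [InnerProductSpace.toDual_apply_apply, Function.comp_def] using this
    have h2 : HasDerivAt (fun s : ℝ => s * ⟪f' u, w⟫) (⟪f' u, w⟫) s := by
      simpa using (hasDerivAt_id s).mul_const (⟪f' u, w⟫)
    have h3 : HasDerivAt (fun s : ℝ => L/2 * s^2 * ‖w‖^2) (L/2 * (2*s) * ‖w‖^2) s := by
      have := ((hasDerivAt_pow 2 s).const_mul (L/2)).mul_const (‖w‖^2)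
      simpa using this
    exact (h1.sub h2).sub h3
  have hanti : AntitoneOn ψ (Set.Icc (0:ℝ) 1) := by
    refine antitoneOn_of_deriv_nonpos (convex_Icc 0 1) ?_ ?_ ?_
    · exact fun s _ => ((key s).continuousAt.continuousWithinAt)
    · intro s hs
      exact ((key s).differentiableAt.differentiableWithinAt)
    · intro s hs
      rw [interior_Icc] at hs
      rw [(key s).deriv]
      have hle : ⟪f' (u + s • w) - f' u, w⟫ ≤ L * s * ‖w‖^2 := by
        calc ⟪f' (u + s • w) - f' u, w⟫ ≤ ‖f' (u + s • w) - f' u‖ * ‖w‖ :=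
              real_inner_le_norm _ _
          _ ≤ (L * ‖(u + s • w) - u‖) * ‖w‖ := by
              have h5 := hlip (u + s • w) u
              have hwn : (0:ℝ) ≤ ‖w‖ := norm_nonneg w
              nlinarith [h5]
          _ = L * s * ‖w‖^2 := by
              rw [add_sub_cancel_left, norm_smul, Real.norm_eq_abs, abs_of_nonneg hs.1.le]
              ring
      rw [inner_sub_left] at hle
      linarith
  have h01 := hanti (Set.mem_Icc.2 ⟨le_refl 0, zero_le_one⟩)
      (Set.mem_Icc.2 ⟨zero_le_one, le_refl 1⟩) zero_le_one
  simp only [hψ, zero_smul, add_zero, one_smul, zero_mul, sub_zero, one_mul, one_pow] at h01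
  have huw : u + w = v := by rw [hw]; abel
  rw [huw] at h01
  nlinarith [h01]

/-- at an unconstrained minimizer of the per-block objective the gradient vanishes. -/
lemma aux_min_grad {g : E → ℝ} {g' : E → E} {L ρ : ℝ} (hL : 0 < L) (hρ : 0 < ρ)
    (hg : ∀ z, HasGradientAt g (g' z) z)
    (hlip : ∀ u v, ‖g' u - g' v‖ ≤ L * ‖u - v‖) (y x0 m : E)
    (hmin : ∀ z, g m + ⟪y, m - x0⟫ + ρ/2 * ‖m - x0‖^2
      ≤ g z + ⟪y, z - x0⟫ + ρ/2 * ‖z - x0‖^2) :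
    g' m + y + ρ • (m - x0) = 0 := by
  set d : E := g' m + y + ρ • (m - x0) with hd
  by_contra hne
  have hdn : 0 < ‖d‖^2 := by
    have : 0 < ‖d‖ := norm_pos_iff.mpr hne
    positivity
  set s : ℝ := -(1/(L+ρ)) with hs
  set z : E := m + s • d with hz
  have h1 : g z ≤ g m + s * ⟪g' m, d⟫ + L/2 * s^2 * ‖d‖^2 := by
    have := aux_descent hg hlip m z
    rw [hz] at this ⊢
    rw [add_sub_cancel_left] at this
    rw [real_inner_smul_right, norm_smul, Real.norm_eq_abs, mul_pow, sq_abs] at this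
    linarith
  have h2 : ⟪y, z - x0⟫ = ⟪y, m - x0⟫ + s * ⟪y, d⟫ := by
    rw [hz]
    rw [show m + s • d - x0 = (m - x0) + s • d by abel, inner_add_right,
      real_inner_smul_right]
  have h3 : ‖z - x0‖^2 = ‖m - x0‖^2 + 2 * (s * ⟪m - x0, d⟫) + s^2 * ‖d‖^2 := by
    rw [hz, show m + s • d - x0 = (m - x0) + s • d by abel, norm_add_sq_real,
      real_inner_smul_right, norm_smul, Real.norm_eq_abs, mul_pow, sq_abs]
  have hinner : ⟪g' m, d⟫ + ⟪y, d⟫ + ρ * ⟪m - x0, d⟫ = ‖d‖^2 := by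
    rw [← real_inner_self_eq_norm_sq, hd]
    rw [inner_add_left, inner_add_left, real_inner_smul_left]
  have hmz := hmin z
  have hkey : s * ‖d‖^2 + (L+ρ)/2 * s^2 * ‖d‖^2 < 0 := by
    rw [hs]
    have hLρ : 0 < L + ρ := by linarith
    have e1 : -(1/(L+ρ)) * ‖d‖^2 + (L+ρ)/2 * (-(1/(L+ρ)))^2 * ‖d‖^2
        = -(1/(2*(L+ρ))) * ‖d‖^2 := by
      field_simp
      ring
    rw [e1]
    have : 0 < 1/(2*(L+ρ)) := by positivity
    nlinarith
  have h4 : ρ/2 * ‖z - x0‖^2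
      = ρ/2*‖m-x0‖^2 + ρ*(s*⟪m-x0,d⟫) + ρ/2*(s^2*‖d‖^2) := by rw [h3]; ring
  have h5 : s*⟪g' m,d⟫ + s*⟪y,d⟫ + ρ*(s*⟪m-x0,d⟫) = s*‖d‖^2 := by
    linear_combination s * hinner
  have h6 : (L+ρ)/2 * s^2 * ‖d‖^2 = L/2*s^2*‖d‖^2 + ρ/2*(s^2*‖d‖^2) := by ring
  clear hd hz hs hmin hg hlip hinner h3
  clear_value d s z
  linarith [hmz, h1, h2, h4, h5, h6, hkey]

/-- shifted-index limits. -/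
lemma aux_shift {u : ℕ → E} {a : E} {T : ℕ}
    (hd : Tendsto (fun n => ‖u (n+1) - u n‖) atTop (nhds 0))
    {φ : ℕ → ℕ} (hφ : Tendsto φ atTop atTop)
    (hu : Tendsto (fun t => u (φ t)) atTop (nhds a))
    {s : ℕ → ℕ} (hs1 : ∀ t, φ t ≤ s t) (hs2 : ∀ t, s t ≤ φ t + T) :
    Tendsto (fun t => u (s t)) atTop (nhds a) := by
  have hM : Tendsto (fun t => ∑ i ∈ Finset.range T, ‖u (φ t + i + 1) - u (φ t + i)‖)
      atTop (nhds 0) := by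
    have h0 : ∀ i : ℕ, Tendsto (fun t => ‖u (φ t + i + 1) - u (φ t + i)‖) atTop (nhds 0) := by
      intro i
      have h1 : Tendsto (fun n => ‖u (n + i + 1) - u (n + i)‖) atTop (nhds 0) :=
        (tendsto_add_atTop_iff_nat i).2 hd
      exact h1.comp hφ
    have := tendsto_finset_sum (Finset.range T) (fun i _ => h0 i)
    simpa using this
  have hzero : Tendsto (fun t => u (s t) - u (φ t)) atTop (nhds 0) := by
    rw [tendsto_zero_iff_norm_tendsto_zero]
    refine squeeze_zero (fun t => norm_nonneg _) (fun t => ?_) hM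
    have e1 := hs1 t
    have e2 := hs2 t
    have hst : s t = φ t + (s t - φ t) := by omega
    rw [hst]
    exact aux_tele u (φ t) (s t - φ t) T (by omega)
  have := hzero.add hu
  simpa using this

/-- helper: norm² → 0 implies norm → 0. -/
lemma aux_sq_to_norm {v : ℕ → E} (h : Tendsto (fun n => ‖v n‖^2) atTop (nhds 0)) :
    Tendsto (fun n => ‖v n‖) atTop (nhds 0) := by
  have h4 := (Real.continuous_sqrt.tendsto 0).comp h
  simp only [Function.comp_def, Real.sqrt_zero] at h4
  exact h4.congr fun n => Real.sqrt_sq (norm_nonneg _)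

/-- helper: shift a null sequence. -/
lemma aux_unshift {f : ℕ → ℝ} (h : Tendsto (fun n => f (n+1)) atTop (nhds 0)) :
    Tendsto f atTop (nhds 0) :=
  (tendsto_add_atTop_iff_nat 1).1 h

end Helpers

set_option maxHeartbeats 1600000 in
/-- **Theorem 2.1, part 2.**  Under the period-`T` essentially cyclic rule and Assumptions
A1–A3, any limit point `({x*_k}, x*_0, y*)` of the ADMM iterates is a stationary solution of
the reformulated consensus problem: `∇g_k(x*_k) + y*_k = 0`, `x*_0` minimizes
`x ↦ h(x) + Σ_k ⟨y*_k, x*_k − x⟩` over `X`, and `x*_k = x*_0` for all `k`. -/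
theorem theorem2_1_part2
    {N K : ℕ} (hK : 1 ≤ K)
    (g : Fin K → EuclideanSpace ℝ (Fin N) → ℝ)
    (g' : Fin K → EuclideanSpace ℝ (Fin N) → EuclideanSpace ℝ (Fin N))
    (h : EuclideanSpace ℝ (Fin N) → ℝ)
    (X : Set (EuclideanSpace ℝ (Fin N)))
    (Lg ρ γ : Fin K → ℝ)
    (x : ℕ → Fin K → EuclideanSpace ℝ (Fin N))
    (x0 : ℕ → EuclideanSpace ℝ (Fin N))
    (y : ℕ → Fin K → EuclideanSpace ℝ (Fin N))
    (C : ℕ → Finset (Option (Fin K)))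
    -- Assumption A1
    (hgrad : ∀ k z, HasGradientAt (g k) (g' k z) z)
    (hLpos : ∀ k, 0 < Lg k)
    (hLip : ∀ k u v, ‖g' k u - g' k v‖ ≤ Lg k * ‖u - v‖)
    (hconv : ConvexOn ℝ Set.univ h)
    (hXne : X.Nonempty) (hXcl : IsClosed X) (hXcv : Convex ℝ X)
    (hρ : ∀ k, 0 < ρ k)
    -- Assumption A2
    (hγpos : ∀ k, 0 < γ k)
    (hstrong : ∀ k, StrongConvexOn Set.univ (γ k)
      (fun z : EuclideanSpace ℝ (Fin N) => g k z + ρ k / 2 * ‖z‖ ^ 2))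
    (hA2b : ∀ k, 2 * Lg k ^ 2 < ρ k * γ k)
    (hA2c : ∀ k, Lg k ≤ ρ k)
    -- Assumption A3 : `f` is bounded below over `X`
    (hbdd : BddBelow ((fun z => (∑ k, g k z) + h z) '' X))
    -- Algorithm 2
    (hC1 : C 1 = Finset.univ)
    (hx0upd : ∀ t : ℕ,
      (none ∈ C (t + 1) → x0 (t + 1) ∈ X ∧ ∀ z ∈ X,
        augL g h ρ (x t) (x0 (t + 1)) (y t) ≤ augL g h ρ (x t) z (y t)) ∧
      (none ∉ C (t + 1) → x0 (t + 1) = x0 t))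
    (hxupd : ∀ (t : ℕ) (k : Fin K),
      (some k ∈ C (t + 1) → ∀ z : EuclideanSpace ℝ (Fin N),
        g k (x (t + 1) k) + ⟪y t k, x (t + 1) k - x0 (t + 1)⟫
            + ρ k / 2 * ‖x (t + 1) k - x0 (t + 1)‖ ^ 2
          ≤ g k z + ⟪y t k, z - x0 (t + 1)⟫ + ρ k / 2 * ‖z - x0 (t + 1)‖ ^ 2) ∧
      (some k ∉ C (t + 1) → x (t + 1) k = x t k))
    (hyupd : ∀ (t : ℕ) (k : Fin K),
      (some k ∈ C (t + 1) → y (t + 1) k = y t k + ρ k • (x (t + 1) k - x0 (t + 1))) ∧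
      (some k ∉ C (t + 1) → y (t + 1) k = y t k))
    -- period-T essentially cyclic rule
    (T : ℕ) (hT : 1 ≤ T)
    (hcyc : ∀ (t : ℕ) (j : Option (Fin K)), ∃ i, 1 ≤ i ∧ i ≤ T ∧ j ∈ C (t + i))
    -- limit point along a subsequence
    (xs : Fin K → EuclideanSpace ℝ (Fin N)) (x0s : EuclideanSpace ℝ (Fin N))
    (ys : Fin K → EuclideanSpace ℝ (Fin N))
    (φ : ℕ → ℕ) (hφ : StrictMono φ)
    (hlim_x : ∀ k, Tendsto (fun t => x (φ t) k) atTop (nhds (xs k)))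
    (hlim_x0 : Tendsto (fun t => x0 (φ t)) atTop (nhds x0s))
    (hlim_y : ∀ k, Tendsto (fun t => y (φ t) k) atTop (nhds (ys k)))
    :
    (∀ k : Fin K, g' k (xs k) + ys k = 0) ∧
    (x0s ∈ X ∧ ∀ z ∈ X,
      h x0s + ∑ k, ⟪ys k, xs k - x0s⟫ ≤ h z + ∑ k, ⟪ys k, xs k - z⟫) ∧
    (∀ k : Fin K, xs k = x0s) := by
  -- basic facts
  have hφt : Tendsto φ atTop atTop := hφ.tendsto_atTop
  have hKpos : 0 < K := hK
  have hc : ∀ k, 0 < γ k / 2 - Lg k ^ 2 / ρ k := by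
    intro k
    have h1 := hA2b k
    have h2 := hρ k
    rw [sub_pos, div_lt_div_iff₀ h2 (by norm_num : (0:ℝ) < 2)]
    nlinarith
  have hR : 0 < ∑ k, ρ k :=
    Finset.sum_pos (fun k _ => hρ k) (Finset.univ_nonempty_iff.2 ⟨⟨0, hKpos⟩⟩)
  -- sum reorganization of the augmented Lagrangian
  have haug : ∀ (xx : Fin K → EuclideanSpace ℝ (Fin N)) (z : EuclideanSpace ℝ (Fin N))
      (yy : Fin K → EuclideanSpace ℝ (Fin N)),
      augL g h ρ xx z yy
        = (∑ k, (g k (xx k) + ⟪yy k, xx k - z⟫ + ρ k / 2 * ‖xx k - z‖ ^ 2)) + h z := by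
    intro xx z yy
    unfold augL
    rw [Finset.sum_add_distrib, Finset.sum_add_distrib]
    ring
  -- (1) gradient vanishes at block minimizers
  have hgradmin : ∀ t k, some k ∈ C (t+1) →
      g' k (x (t+1) k) + y t k + ρ k • (x (t+1) k - x0 (t+1)) = 0 := by
    intro t k hk
    exact aux_min_grad (hLpos k) (hρ k) (hgrad k) (hLip k) _ _ _ ((hxupd t k).1 hk)
  -- (2) dual identity after updates
  have hyg : ∀ t k, some k ∈ C (t+1) → y (t+1) k = -(g' k (x (t+1) k)) := by
    intro t k hk
    have h1 := hgradmin t k hk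
    have h2 := (hyupd t k).1 hk
    rw [h2, eq_neg_iff_add_eq_zero, ← h1]
    abel
  -- (3) feasibility of x0
  have hxX : ∀ t, 1 ≤ t → x0 t ∈ X := by
    intro t ht
    induction t with
    | zero => omega
    | succ n ih =>
      by_cases hmem : none ∈ C (n+1)
      · exact ((hx0upd n).1 hmem).1
      · rw [(hx0upd n).2 hmem]
        rcases Nat.eq_or_lt_of_le ht with h1 | h1
        · exfalso
          apply hmem
          have : n = 0 := by omega
          rw [this, hC1]
          exact Finset.mem_univ _
        · exact ih (by omega)
  -- (4) dual invariant
  have hyinv : ∀ t, 1 ≤ t → ∀ k, y t k = -(g' k (x t k)) := by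
    intro t ht
    induction t with
    | zero => omega
    | succ n ih =>
      intro k
      by_cases hmem : some k ∈ C (n+1)
      · exact hyg n k hmem
      · have hn : 1 ≤ n := by
          by_contra hn
          apply hmem
          have : n = 0 := by omega
          rw [this, hC1]
          exact Finset.mem_univ _
        rw [(hyupd n k).2 hmem, (hxupd n k).2 hmem]
        exact ih hn k
  -- potential function
  set P : ℕ → ℝ := fun t => augL g h ρ (x t) (x0 t) (y t) with hP
  -- (6) descent in the x0 step
  have hB1 : ∀ t, 1 ≤ t →
      augL g h ρ (x t) (x0 (t+1)) (y t) + (∑ k, ρ k)/2 * ‖x0 (t+1) - x0 t‖^2 ≤ P t := by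
    intro t ht
    by_cases hmem : none ∈ C (t+1)
    · -- strong convexity of the x0-objective
      have heqF : (fun z => augL g h ρ (x t) z (y t))
          = fun z => ((∑ k, ρ k)/2 * ‖z‖^2
              + (⟪∑ k, (-(y t k) - ρ k • (x t k)), z⟫
                + (∑ k, (g k (x t k) + ρ k / 2 * ‖x t k‖^2 + ⟪y t k, x t k⟫)))) + h z := by
        funext z
        rw [haug]
        have hk : ∀ k ∈ Finset.univ, g k (x t k) + ⟪y t k, x t k - z⟫ + ρ k/2 * ‖x t k - z‖^2
            = ρ k/2 * ‖z‖^2 + (⟪-(y t k) - ρ k • (x t k), z⟫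
              + (g k (x t k) + ρ k/2 * ‖x t k‖^2 + ⟪y t k, x t k⟫)) := by
          intro k _
          have e := aux_expand (-(y t k)) (x t k) (ρ k) z
          simp only [inner_neg_left, inner_sub_right] at e
          rw [norm_sub_rev (x t k) z, inner_sub_right]
          linarith [e]
        rw [Finset.sum_congr rfl hk, Finset.sum_add_distrib, Finset.sum_add_distrib,
          ← sum_inner, ← Finset.sum_mul, ← Finset.sum_div]
      have hSC : StrongConvexOn X (∑ k, ρ k) (fun z => augL g h ρ (x t) z (y t)) := by
        rw [heqF]
        exact aux_sc_add_convex
          (aux_sc_affine (aux_sc_norm hXcv) _ _)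
          (hconv.subset (Set.subset_univ X) hXcv)
      have hmin := ((hx0upd t).1 hmem).2
      have hmX := ((hx0upd t).1 hmem).1
      have := aux_strong_min hSC hmX hmin (x0 t) (hxX t ht)
      rw [norm_sub_rev] at this
      exact this
    · rw [(hx0upd t).2 hmem, sub_self, norm_zero]
      simp [hP]
  -- (7) per-block descent in the x and y steps
  have hB2k : ∀ t, 1 ≤ t → ∀ k,
      (γ k / 2 - Lg k ^ 2 / ρ k) * ‖x (t+1) k - x t k‖^2
        + (g k (x (t+1) k) + ⟪y (t+1) k, x (t+1) k - x0 (t+1)⟫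
            + ρ k / 2 * ‖x (t+1) k - x0 (t+1)‖ ^ 2)
      ≤ g k (x t k) + ⟪y t k, x t k - x0 (t+1)⟫ + ρ k / 2 * ‖x t k - x0 (t+1)‖ ^ 2 := by
    intro t ht k
    by_cases hmem : some k ∈ C (t+1)
    · -- (a) strong minimality of the x-step
      have hSC := aux_sc_term (hstrong k) (y t k) (x0 (t+1))
      have hmin : ∀ z ∈ Set.univ,
          (fun u => g k u + ⟪y t k, u - x0 (t+1)⟫ + ρ k / 2 * ‖u - x0 (t+1)‖ ^ 2)
              (x (t+1) k)
            ≤ (fun u => g k u + ⟪y t k, u - x0 (t+1)⟫ + ρ k / 2 * ‖u - x0 (t+1)‖ ^ 2) z :=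
        fun z _ => (hxupd t k).1 hmem z
      have ha := aux_strong_min hSC (Set.mem_univ (x (t+1) k)) hmin (x t k) (Set.mem_univ _)
      -- (b) dual-step increase
      have hyy := (hyupd t k).1 hmem
      have hinner : ⟪y (t+1) k, x (t+1) k - x0 (t+1)⟫
          = ⟪y t k, x (t+1) k - x0 (t+1)⟫ + ρ k * ‖x (t+1) k - x0 (t+1)‖^2 := by
        rw [hyy, inner_add_left, real_inner_smul_left, real_inner_self_eq_norm_sq]
      have hgeq : ρ k • (x (t+1) k - x0 (t+1)) = g' k (x t k) - g' k (x (t+1) k) := by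
        have e1 := hyg t k hmem
        have e2 := hyinv t ht k
        have e3 : ρ k • (x (t+1) k - x0 (t+1)) = y (t+1) k - y t k := by
          rw [hyy]; abel
        rw [e3, e1, e2]
        abel
      have hbnd : ρ k * ‖x (t+1) k - x0 (t+1)‖^2
          ≤ Lg k ^ 2 / ρ k * ‖x (t+1) k - x t k‖^2 := by
        have e1 : ρ k * ‖x (t+1) k - x0 (t+1)‖ ≤ Lg k * ‖x (t+1) k - x t k‖ := by
          have e2 : ‖ρ k • (x (t+1) k - x0 (t+1))‖ = ρ k * ‖x (t+1) k - x0 (t+1)‖ := by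
            rw [norm_smul, Real.norm_eq_abs, abs_of_pos (hρ k)]
          rw [← e2, hgeq]
          rw [norm_sub_rev (x (t+1) k) (x t k)]
          exact hLip k _ _
        have e3 : (ρ k * ‖x (t+1) k - x0 (t+1)‖)^2 ≤ (Lg k * ‖x (t+1) k - x t k‖)^2 :=
          pow_le_pow_left₀ (mul_nonneg (hρ k).le (norm_nonneg _)) e1 2
        rw [div_mul_eq_mul_div, le_div_iff₀ (hρ k)]
        nlinarith [e3]
      rw [norm_sub_rev (x t k) (x (t+1) k)] at ha
      clear hgeq hyy hmin hSC
      linarith [ha, hinner, hbnd]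
    · rw [(hxupd t k).2 hmem, (hyupd t k).2 hmem, sub_self, norm_zero]
      simp
  -- (8) full descent
  have hB3 : ∀ t, 1 ≤ t →
      P (t+1) + ((∑ k, ρ k)/2 * ‖x0 (t+1) - x0 t‖^2
        + ∑ k, (γ k / 2 - Lg k ^ 2 / ρ k) * ‖x (t+1) k - x t k‖^2) ≤ P t := by
    intro t ht
    have h1 := hB1 t ht
    have h2 : (∑ k, (γ k / 2 - Lg k ^ 2 / ρ k) * ‖x (t+1) k - x t k‖^2)
        + (∑ k, (g k (x (t+1) k) + ⟪y (t+1) k, x (t+1) k - x0 (t+1)⟫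
            + ρ k / 2 * ‖x (t+1) k - x0 (t+1)‖ ^ 2))
        ≤ ∑ k, (g k (x t k) + ⟪y t k, x t k - x0 (t+1)⟫
            + ρ k / 2 * ‖x t k - x0 (t+1)‖ ^ 2) := by
      rw [← Finset.sum_add_distrib]
      exact Finset.sum_le_sum fun k _ => hB2k t ht k
    have h3 : P (t+1) = (∑ k, (g k (x (t+1) k) + ⟪y (t+1) k, x (t+1) k - x0 (t+1)⟫
        + ρ k / 2 * ‖x (t+1) k - x0 (t+1)‖ ^ 2)) + h (x0 (t+1)) := by
      rw [hP]; exact haug _ _ _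
    have h4 : augL g h ρ (x t) (x0 (t+1)) (y t)
        = (∑ k, (g k (x t k) + ⟪y t k, x t k - x0 (t+1)⟫
            + ρ k / 2 * ‖x t k - x0 (t+1)‖ ^ 2)) + h (x0 (t+1)) := haug _ _ _
    linarith [h1, h2]
  -- (9) lower bound on the potential
  obtain ⟨b, hb⟩ := hbdd
  have hlow : ∀ t, 1 ≤ t → b ≤ P t := by
    intro t ht
    have hkterm : ∀ k ∈ Finset.univ, g k (x0 t)
        ≤ g k (x t k) + ⟪y t k, x t k - x0 t⟫ + ρ k / 2 * ‖x t k - x0 t‖ ^ 2 := by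
      intro k _
      have hd := aux_descent (hgrad k) (hLip k) (x t k) (x0 t)
      have hy := hyinv t ht k
      have hi : ⟪g' k (x t k), x0 t - x t k⟫ = ⟪y t k, x t k - x0 t⟫ := by
        rw [hy, inner_neg_left, inner_sub_right, inner_sub_right]
        ring
      rw [hi] at hd
      have hLρ : Lg k / 2 * ‖x0 t - x t k‖ ^ 2 ≤ ρ k / 2 * ‖x t k - x0 t‖ ^ 2 := by
        rw [norm_sub_rev (x0 t)]
        have := hA2c k
        nlinarith [sq_nonneg (‖x t k - x0 t‖)]
      linarith
    have h1 : (∑ k, g k (x0 t)) + h (x0 t) ≤ P t := by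
      rw [hP]
      simp only
      rw [haug]
      have := Finset.sum_le_sum hkterm
      linarith
    have h2 : b ≤ (∑ k, g k (x0 t)) + h (x0 t) := hb ⟨x0 t, hxX t ht, rfl⟩
    linarith
  -- (10) convergence of the potential, dissipation → 0
  set u : ℕ → ℝ := fun n => P (n+1) with hu
  have huanti : Antitone u := by
    refine antitone_nat_of_succ_le fun n => ?_
    have h1 := hB3 (n+1) (by omega)
    have h2 : 0 ≤ (∑ k, ρ k)/2 * ‖x0 (n+2) - x0 (n+1)‖^2 :=
      mul_nonneg (div_nonneg hR.le zero_le_two) (sq_nonneg _)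
    have h3 : 0 ≤ ∑ k, (γ k / 2 - Lg k ^ 2 / ρ k) * ‖x (n+2) k - x (n+1) k‖^2 :=
      Finset.sum_nonneg fun k _ => mul_nonneg (hc k).le (sq_nonneg _)
    simp only [hu]
    have : n + 1 + 1 = n + 2 := rfl
    linarith
  have hubdd : BddBelow (Set.range u) := by
    refine ⟨b, ?_⟩
    rintro v ⟨n, rfl⟩
    exact hlow (n+1) (by omega)
  have hulim : Tendsto u atTop (nhds (⨅ n, u n)) := tendsto_atTop_ciInf huanti hubdd
  have hdiff : Tendsto (fun n => u n - u (n+1)) atTop (nhds 0) := by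
    have h2 : Tendsto (fun n => u (n+1)) atTop (nhds (⨅ n, u n)) :=
      hulim.comp (tendsto_add_atTop_nat 1)
    have := hulim.sub h2
    simpa using this
  -- (11) successive differences of x0 and x go to 0
  have hSnonneg : ∀ n : ℕ, 0 ≤ ∑ k, (γ k / 2 - Lg k ^ 2 / ρ k) * ‖x (n+1+1) k - x (n+1) k‖^2 :=
    fun n => Finset.sum_nonneg fun k _ => mul_nonneg (hc k).le (sq_nonneg _)
  have hx0diff : Tendsto (fun n => ‖x0 (n+1) - x0 n‖) atTop (nhds 0) := by
    have hsqlim : Tendsto (fun n => ‖x0 (n+1+1) - x0 (n+1)‖^2) atTop (nhds 0) := by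
      refine squeeze_zero (fun n => by positivity) (fun n => ?_)
        (by simpa using hdiff.const_mul (2/(∑ k, ρ k)))
      have h1 := hB3 (n+1) (by omega)
      have h3 := hSnonneg n
      have key : (∑ k, ρ k)/2 * ‖x0 (n+1+1) - x0 (n+1)‖^2 ≤ u n - u (n+1) := by
        simp only [hu]
        linarith
      have e1 : 2/(∑ k, ρ k) * ((∑ k, ρ k)/2) = 1 := by
        field_simp
      calc ‖x0 (n+1+1) - x0 (n+1)‖^2
          = 2/(∑ k, ρ k) * ((∑ k, ρ k)/2 * ‖x0 (n+1+1) - x0 (n+1)‖^2) := by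
            rw [← mul_assoc, e1, one_mul]
        _ ≤ 2/(∑ k, ρ k) * (u n - u (n+1)) :=
            mul_le_mul_of_nonneg_left key (div_nonneg zero_le_two hR.le)
    exact aux_unshift (aux_sq_to_norm hsqlim)
  have hxdiff : ∀ k, Tendsto (fun n => ‖x (n+1) k - x n k‖) atTop (nhds 0) := by
    intro k
    have hsqlim : Tendsto (fun n => ‖x (n+1+1) k - x (n+1) k‖^2) atTop (nhds 0) := by
      refine squeeze_zero (fun n => by positivity) (fun n => ?_)
        (by simpa using hdiff.const_mul (1/(γ k / 2 - Lg k ^ 2 / ρ k)))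
      have h1 := hB3 (n+1) (by omega)
      have h2 : (γ k / 2 - Lg k ^ 2 / ρ k) * ‖x (n+1+1) k - x (n+1) k‖^2
          ≤ ∑ j, (γ j / 2 - Lg j ^ 2 / ρ j) * ‖x (n+1+1) j - x (n+1) j‖^2 :=
        Finset.single_le_sum
          (f := fun j => (γ j / 2 - Lg j ^ 2 / ρ j) * ‖x (n+1+1) j - x (n+1) j‖^2)
          (fun j _ => mul_nonneg (hc j).le (sq_nonneg _)) (Finset.mem_univ k)
      have h3 : 0 ≤ (∑ j, ρ j)/2 * ‖x0 (n+1+1) - x0 (n+1)‖^2 :=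
        mul_nonneg (div_nonneg hR.le zero_le_two) (sq_nonneg _)
      have key : (γ k / 2 - Lg k ^ 2 / ρ k) * ‖x (n+1+1) k - x (n+1) k‖^2
          ≤ u n - u (n+1) := by
        simp only [hu]
        linarith
      have e1 : 1/(γ k / 2 - Lg k ^ 2 / ρ k) * (γ k / 2 - Lg k ^ 2 / ρ k) = 1 :=
        one_div_mul_cancel (ne_of_gt (hc k))
      calc ‖x (n+1+1) k - x (n+1) k‖^2
          = 1/(γ k / 2 - Lg k ^ 2 / ρ k)
              * ((γ k / 2 - Lg k ^ 2 / ρ k) * ‖x (n+1+1) k - x (n+1) k‖^2) := by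
            rw [← mul_assoc, e1, one_mul]
        _ ≤ 1/(γ k / 2 - Lg k ^ 2 / ρ k) * (u n - u (n+1)) :=
            mul_le_mul_of_nonneg_left key (one_div_nonneg.2 (hc k).le)
    exact aux_unshift (aux_sq_to_norm hsqlim)
  -- (12) successive differences of y go to 0
  have hydiff : ∀ k, Tendsto (fun n => ‖y (n+1) k - y n k‖) atTop (nhds 0) := by
    intro k
    refine squeeze_zero' (Eventually.of_forall fun n => norm_nonneg _) ?_
      (by simpa using (hxdiff k).const_mul (Lg k))
    refine eventually_atTop.2 ⟨1, fun n hn => ?_⟩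
    by_cases hmem : some k ∈ C (n+1)
    · have e1 := hyg n k hmem
      have e2 := hyinv n hn k
      rw [e1, e2]
      have e3 : -(g' k (x (n+1) k)) - -(g' k (x n k)) = g' k (x n k) - g' k (x (n+1) k) := by
        abel
      rw [e3]
      calc ‖g' k (x n k) - g' k (x (n+1) k)‖ ≤ Lg k * ‖x n k - x (n+1) k‖ := hLip k _ _
        _ = Lg k * ‖x (n+1) k - x n k‖ := by rw [norm_sub_rev]
    · rw [(hyupd n k).2 hmem, sub_self, norm_zero]
      exact mul_nonneg (hLpos k).le (norm_nonneg _)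
  -- (13) consensus error goes to 0
  have hxx0 : ∀ k, Tendsto (fun t => ‖x t k - x0 t‖) atTop (nhds 0) := by
    intro k
    have hMlim : Tendsto (fun t => (1/ρ k) * (∑ i ∈ Finset.range T, ‖y (t+i+1) k - y (t+i) k‖)
        + (∑ i ∈ Finset.range T, ‖x (t+i+1) k - x (t+i) k‖)
        + (∑ i ∈ Finset.range T, ‖x0 (t+i+1) - x0 (t+i)‖)) atTop (nhds 0) := by
      have l1 : Tendsto (fun t => ∑ i ∈ Finset.range T, ‖y (t+i+1) k - y (t+i) k‖)
          atTop (nhds 0) := by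
        have := tendsto_finset_sum (Finset.range T)
          (fun i (_ : i ∈ Finset.range T) => (tendsto_add_atTop_iff_nat i).2 (hydiff k))
        simpa using this
      have l2 : Tendsto (fun t => ∑ i ∈ Finset.range T, ‖x (t+i+1) k - x (t+i) k‖)
          atTop (nhds 0) := by
        have := tendsto_finset_sum (Finset.range T)
          (fun i (_ : i ∈ Finset.range T) => (tendsto_add_atTop_iff_nat i).2 (hxdiff k))
        simpa using this
      have l3 : Tendsto (fun t => ∑ i ∈ Finset.range T, ‖x0 (t+i+1) - x0 (t+i)‖)
          atTop (nhds 0) := by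
        have := tendsto_finset_sum (Finset.range T)
          (fun i (_ : i ∈ Finset.range T) => (tendsto_add_atTop_iff_nat i).2 hx0diff)
        simpa using this
      have := ((l1.const_mul (1/ρ k)).add l2).add l3
      simpa using this
    refine squeeze_zero (fun t => norm_nonneg _) (fun t => ?_) hMlim
    obtain ⟨i, hi1, hiT, hmem⟩ := hcyc t (some k)
    obtain ⟨j, rfl⟩ : ∃ j, i = j+1 := ⟨i-1, by omega⟩
    have hmem' : some k ∈ C (t+j+1) := by
      have e : t + (j+1) = t+j+1 := by omega
      rwa [e] at hmem
    have hyrel := (hyupd (t+j) k).1 hmem'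
    have hsz : ρ k * ‖x (t+j+1) k - x0 (t+j+1)‖ = ‖y (t+j+1) k - y (t+j) k‖ := by
      rw [hyrel, add_sub_cancel_left, norm_smul, Real.norm_eq_abs, abs_of_pos (hρ k)]
    have tri : ‖x t k - x0 t‖ ≤ ‖x t k - x (t+j+1) k‖ + ‖x (t+j+1) k - x0 (t+j+1)‖
        + ‖x0 (t+j+1) - x0 t‖ := by
      calc ‖x t k - x0 t‖ = ‖(x t k - x (t+j+1) k) + (x (t+j+1) k - x0 (t+j+1))
          + (x0 (t+j+1) - x0 t)‖ := by congr 1; abel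
        _ ≤ _ := norm_add₃_le
    have t1 : ‖x t k - x (t+j+1) k‖ ≤ ∑ i ∈ Finset.range T, ‖x (t+i+1) k - x (t+i) k‖ := by
      rw [norm_sub_rev]
      exact aux_tele (fun n => x n k) t (j+1) T (by omega)
    have t3 : ‖x0 (t+j+1) - x0 t‖ ≤ ∑ i ∈ Finset.range T, ‖x0 (t+i+1) - x0 (t+i)‖ := by
      have h6 := aux_tele x0 t (j+1) T (by omega)
      exact h6
    have t2 : ‖x (t+j+1) k - x0 (t+j+1)‖
        ≤ (1/ρ k) * ∑ i ∈ Finset.range T, ‖y (t+i+1) k - y (t+i) k‖ := by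
      have hterm : ‖y (t+j+1) k - y (t+j) k‖
          ≤ ∑ i ∈ Finset.range T, ‖y (t+i+1) k - y (t+i) k‖ :=
        Finset.single_le_sum (f := fun i => ‖y (t+i+1) k - y (t+i) k‖)
          (fun i _ => norm_nonneg _) (Finset.mem_range.2 (by omega))
      have h5 : ρ k * ‖x (t+j+1) k - x0 (t+j+1)‖
          ≤ ∑ i ∈ Finset.range T, ‖y (t+i+1) k - y (t+i) k‖ := hsz ▸ hterm
      have e1 : 1/(ρ k) * (ρ k) = 1 := one_div_mul_cancel (ne_of_gt (hρ k))
      calc ‖x (t+j+1) k - x0 (t+j+1)‖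
          = 1/(ρ k) * (ρ k * ‖x (t+j+1) k - x0 (t+j+1)‖) := by rw [← mul_assoc, e1, one_mul]
        _ ≤ _ := mul_le_mul_of_nonneg_left h5 (one_div_nonneg.2 (hρ k).le)
    linarith
  -- (14) part (iii)
  have hiii : ∀ k, xs k = x0s := by
    intro k
    have h1 : Tendsto (fun t => x (φ t) k - x0 (φ t)) atTop (nhds (xs k - x0s)) :=
      (hlim_x k).sub hlim_x0
    have h2 : Tendsto (fun t => ‖x (φ t) k - x0 (φ t)‖) atTop (nhds 0) := (hxx0 k).comp hφt
    have h3 : Tendsto (fun t => ‖x (φ t) k - x0 (φ t)‖) atTop (nhds (‖xs k - x0s‖)) := h1.norm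
    exact sub_eq_zero.1 (norm_eq_zero.1 (tendsto_nhds_unique h3 h2))
  -- (15) part (i)
  have hgc : ∀ k, Continuous (g' k) := by
    intro k
    have hl : LipschitzWith (Real.toNNReal (Lg k)) (g' k) := by
      apply LipschitzWith.of_dist_le_mul
      intro u v
      rw [dist_eq_norm, dist_eq_norm]
      calc ‖g' k u - g' k v‖ ≤ Lg k * ‖u - v‖ := hLip k u v
        _ = (Real.toNNReal (Lg k) : ℝ) * ‖u - v‖ := by
            rw [Real.coe_toNNReal _ (hLpos k).le]
    exact hl.continuous
  have hparti : ∀ k, g' k (xs k) + ys k = 0 := by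
    intro k
    have h1 : Tendsto (fun t => y (φ t) k) atTop (nhds (-(g' k (xs k)))) := by
      have h2 : Tendsto (fun t => -(g' k (x (φ t) k))) atTop (nhds (-(g' k (xs k)))) :=
        (((hgc k).tendsto (xs k)).comp (hlim_x k)).neg
      refine h2.congr' ?_
      filter_upwards [eventually_ge_atTop 1] with t ht
      exact (hyinv (φ t) (le_trans ht hφ.le_apply) k).symm
    have := tendsto_nhds_unique (hlim_y k) h1
    rw [this]
    abel
  -- (16) x0s feasible
  have hx0sX : x0s ∈ X := by
    refine hXcl.mem_of_tendsto hlim_x0 ?_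
    filter_upwards [eventually_ge_atTop 1] with t ht
    exact hxX (φ t) (le_trans ht hφ.le_apply)
  -- (17) part (ii): the prox inequality in the limit
  have hcont : Continuous h := by
    rw [← continuousOn_univ]
    exact hconv.continuousOn isOpen_univ
  choose i hi1 hiT himem using fun t => hcyc (φ t) none
  have hmain : ∀ z ∈ X,
      h x0s ≤ h z + ∑ k, (⟪ys k, x0s - z⟫ + ρ k/2 * ‖x0s - z‖^2) := by
    intro z hz
    have hs'1 : ∀ t, φ t ≤ φ t + (i t - 1) := fun t => Nat.le_add_right _ _
    have hs'2 : ∀ t, φ t + (i t - 1) ≤ φ t + T := fun t => by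
      have := hiT t; omega
    have hA : ∀ k, Tendsto (fun t => x (φ t + (i t - 1)) k) atTop (nhds x0s) := by
      intro k
      have := aux_shift (u := fun n => x n k) (hxdiff k) hφt (hlim_x k)
        (s := fun t => φ t + (i t - 1)) hs'1 hs'2
      rwa [hiii k] at this
    have hB : Tendsto (fun t => x0 (φ t + (i t - 1) + 1)) atTop (nhds x0s) :=
      aux_shift (u := x0) hx0diff hφt hlim_x0 (s := fun t => φ t + (i t - 1) + 1)
        (fun t => by show φ t ≤ φ t + (i t - 1) + 1; omega)
        (fun t => by show φ t + (i t - 1) + 1 ≤ φ t + T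
                     have := hiT t; have := hi1 t; omega)
    have hC : ∀ k, Tendsto (fun t => y (φ t + (i t - 1)) k) atTop (nhds (ys k)) :=
      fun k => aux_shift (u := fun n => y n k) (hydiff k) hφt (hlim_y k)
        (s := fun t => φ t + (i t - 1)) hs'1 hs'2
    have hineq : ∀ t, h (x0 (φ t + (i t - 1) + 1))
        + ∑ k, (⟪y (φ t + (i t - 1)) k, x (φ t + (i t - 1)) k - x0 (φ t + (i t - 1) + 1)⟫
            + ρ k/2 * ‖x (φ t + (i t - 1)) k - x0 (φ t + (i t - 1) + 1)‖^2)
        ≤ h z + ∑ k, (⟪y (φ t + (i t - 1)) k, x (φ t + (i t - 1)) k - z⟫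
            + ρ k/2 * ‖x (φ t + (i t - 1)) k - z‖^2) := by
      intro t
      have hmem' : none ∈ C (φ t + (i t - 1) + 1) := by
        have h1 := himem t
        have e : φ t + (i t - 1) + 1 = φ t + i t := by have := hi1 t; omega
        rw [e]
        exact h1
      have hle := ((hx0upd (φ t + (i t - 1))).1 hmem').2 z hz
      rw [haug, haug] at hle
      have esplit : ∀ (w : EuclideanSpace ℝ (Fin N)),
          (∑ k, (g k (x (φ t + (i t - 1)) k)
            + ⟪y (φ t + (i t - 1)) k, x (φ t + (i t - 1)) k - w⟫
            + ρ k / 2 * ‖x (φ t + (i t - 1)) k - w‖ ^ 2))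
          = (∑ k, g k (x (φ t + (i t - 1)) k))
            + ∑ k, (⟪y (φ t + (i t - 1)) k, x (φ t + (i t - 1)) k - w⟫
              + ρ k/2 * ‖x (φ t + (i t - 1)) k - w‖^2) := by
        intro w
        rw [← Finset.sum_add_distrib]
        exact Finset.sum_congr rfl fun k _ => by ring
      rw [esplit, esplit] at hle
      linarith
    have hL1 : Tendsto (fun t => h (x0 (φ t + (i t - 1) + 1))
        + ∑ k, (⟪y (φ t + (i t - 1)) k, x (φ t + (i t - 1)) k - x0 (φ t + (i t - 1) + 1)⟫
            + ρ k/2 * ‖x (φ t + (i t - 1)) k - x0 (φ t + (i t - 1) + 1)‖^2)) atTop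
        (nhds (h x0s + ∑ k, (⟪ys k, x0s - x0s⟫ + ρ k/2 * ‖x0s - x0s‖^2))) := by
      refine Tendsto.add ((hcont.tendsto x0s).comp hB) ?_
      refine tendsto_finset_sum _ fun k _ => ?_
      exact ((hC k).inner ((hA k).sub hB)).add
        ((((hA k).sub hB).norm.pow 2).const_mul _)
    have hL2 : Tendsto (fun t => h z
        + ∑ k, (⟪y (φ t + (i t - 1)) k, x (φ t + (i t - 1)) k - z⟫
            + ρ k/2 * ‖x (φ t + (i t - 1)) k - z‖^2)) atTop
        (nhds (h z + ∑ k, (⟪ys k, x0s - z⟫ + ρ k/2 * ‖x0s - z‖^2))) := by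
      refine Tendsto.add tendsto_const_nhds ?_
      refine tendsto_finset_sum _ fun k _ => ?_
      exact ((hC k).inner ((hA k).sub tendsto_const_nhds)).add
        ((((hA k).sub tendsto_const_nhds).norm.pow 2).const_mul _)
    have := le_of_tendsto_of_tendsto' hL1 hL2 hineq
    simpa using this
  refine ⟨hparti, ⟨hx0sX, ?_⟩, hiii⟩
  intro z hz
  have key : ∀ l ∈ Set.Ioc (0:ℝ) 1,
      (h x0s - (h z + ∑ k, ⟪ys k, x0s - z⟫)) ≤ l * (∑ k, ρ k/2 * ‖x0s - z‖^2) := by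
    intro l hl
    obtain ⟨hl0, hl1⟩ := hl
    set zl := (1-l) • x0s + l • z with hzl
    have hzlX : zl ∈ X := hXcv hx0sX hz (by linarith) hl0.le (by ring)
    have hsub : x0s - zl = l • (x0s - z) := by
      rw [hzl, smul_sub, sub_smul, one_smul]
      abel
    have hhzl : h zl ≤ (1-l) * h x0s + l * h z := by
      have := hconv.2 (Set.mem_univ x0s) (Set.mem_univ z) (by linarith : (0:ℝ) ≤ 1-l)
        hl0.le (by ring)
      simpa [hzl, smul_eq_mul] using this
    have hm := hmain zl hzlX
    have hsum : ∑ k, (⟪ys k, x0s - zl⟫ + ρ k/2 * ‖x0s - zl‖^2)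
        = l * (∑ k, ⟪ys k, x0s - z⟫) + l^2 * (∑ k, ρ k/2 * ‖x0s - z‖^2) := by
      have e1 : ∀ k ∈ Finset.univ, ⟪ys k, x0s - zl⟫ + ρ k/2 * ‖x0s - zl‖^2
          = l * ⟪ys k, x0s - z⟫ + l^2 * (ρ k/2 * ‖x0s - z‖^2) := by
        intro k _
        rw [hsub, real_inner_smul_right, norm_smul, Real.norm_eq_abs, abs_of_pos hl0,
          mul_pow]
        ring
      rw [Finset.sum_congr rfl e1, Finset.sum_add_distrib, ← Finset.mul_sum,
        ← Finset.mul_sum]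
    rw [hsum] at hm
    have hfin : l * (h x0s - (h z + ∑ k, ⟪ys k, x0s - z⟫))
        ≤ l * (l * (∑ k, ρ k/2 * ‖x0s - z‖^2)) := by
      nlinarith [hm, hhzl]
    exact le_of_mul_le_mul_left hfin hl0
  have hfin2 := aux_le_zero key
  have hzero : ∑ k, ⟪ys k, xs k - x0s⟫ = (0:ℝ) := by
    apply Finset.sum_eq_zero
    intro k _
    rw [hiii k, sub_self, inner_zero_right]
  have hrepl : ∑ k, ⟪ys k, xs k - z⟫ = ∑ k, ⟪ys k, x0s - z⟫ :=
    Finset.sum_congr rfl fun k _ => by rw [hiii k]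
  rw [hzero, add_zero, hrepl]
  linarith [hfin2]
end
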